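/- arXiv:1102.2471 — 8 statements merged into one kernel-verified Lean document; each statement's English description precedes it below -/
import Mathlib

section
/- Let I ⊂ F[x_1,...,x_d] be a zero-dimensional ideal and let O be a monomial order quotient basis for I. Then O is the unique monomial order quotient basis for I if and only if for every monomial x^α in the corner C[O], the set of monomials {x^β : 0 ≤ β ≤ α componentwise} is linearly dependent modulo I. -/
open MvPolynomial

/-- The corner of an order ideal `O` of monomials (given by exponent vectors). -/
def corner {d : ℕ} (O : Set (Fin d →₀ ℕ)) : Set (Fin d →₀ ℕ) :=
  {α | α ∉ O ∧ ∀ i : Fin d, α i ≠ 0 → α - Finsupp.single i 1 ∈ O}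
/-- `O` (a set of exponent vectors) is a monomial order quotient basis for `I`: it is a finite
order ideal (lower set of exponents) whose monomials give an `F`-vector space basis of
`F[x]/I`. -/
def IsMOQB {d : ℕ} {F : Type*} [Field F] (I : Ideal (MvPolynomial (Fin d) F))
    (O : Set (Fin d →₀ ℕ)) : Prop :=
  O.Finite ∧ IsLowerSet O ∧
  LinearIndependent F (fun t : O => Ideal.Quotient.mk I (monomial (t : Fin d →₀ ℕ) (1 : F))) ∧
  Submodule.span F
    (Set.range fun t : O => Ideal.Quotient.mk I (monomial (t : Fin d →₀ ℕ) (1 : F))) = ⊤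

section Aux

open scoped MonomialOrder

variable {F : Type*} [Field F] {d : ℕ} (I : Ideal (MvPolynomial (Fin d) F))

/-- Image of a monomial in the quotient ring. -/
noncomputable def vmon (μ : Fin d →₀ ℕ) : MvPolynomial (Fin d) F ⧸ I :=
  Ideal.Quotient.mk I (monomial μ (1 : F))

lemma vmon_add (μ ν : Fin d →₀ ℕ) : vmon I (μ + ν) = vmon I μ * vmon I ν := by
  unfold vmon
  rw [← map_mul, monomial_mul, one_mul]

lemma span_vmon_top : Submodule.span F (Set.range (vmon I)) = ⊤ := by
  rw [eq_top_iff]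
  rintro x -
  obtain ⟨p, rfl⟩ := Ideal.Quotient.mk_surjective x
  rw [p.as_sum, map_sum]
  refine Submodule.sum_mem _ fun μ _ => ?_
  have h1 : (monomial μ) (coeff μ p) = (coeff μ p) • (monomial μ (1:F)) := by
    rw [smul_monomial, smul_eq_mul, mul_one]
  have h2 : (Ideal.Quotient.mk I) ((coeff μ p) • (monomial μ (1:F)))
      = (coeff μ p) • vmon I μ := by
    rw [← Ideal.Quotient.mkₐ_eq_mk F I, map_smul]
    rfl
  rw [h1, h2]
  exact Submodule.smul_mem _ _ (Submodule.subset_span ⟨μ, rfl⟩)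

variable (m : MonomialOrder (Fin d))

/-- The set of standard exponents with respect to a monomial order. -/
noncomputable def stdSet : Set (Fin d →₀ ℕ) :=
  {μ | vmon I μ ∉ Submodule.span F (vmon I '' {ν | ν ≺[m] μ})}

lemma stdSet_lower : IsLowerSet (stdSet I m) := by
  intro μ μ' hle hμ
  by_contra hμ'
  simp only [stdSet, Set.mem_setOf_eq, not_not] at hμ'
  obtain ⟨δ, rfl⟩ := le_iff_exists_add.mp hle
  refine hμ ?_
  have h1 : vmon I (μ' + δ) = (LinearMap.mulLeft F (vmon I δ)) (vmon I μ') := by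
    rw [add_comm, vmon_add]; rfl
  rw [h1]
  have h2 := Submodule.apply_mem_span_image_of_mem_span (LinearMap.mulLeft F (vmon I δ)) hμ'
  refine Submodule.span_le.mpr ?_ h2
  rintro x ⟨y, ⟨ν, hν, rfl⟩, rfl⟩
  simp only [Set.mem_setOf_eq] at hν
  refine Submodule.subset_span ⟨ν + δ, ?_, ?_⟩
  · simp only [Set.mem_setOf_eq, map_add]
    exact add_lt_add_left hν _
  · rw [LinearMap.mulLeft_apply, ← vmon_add, add_comm]

lemma stdSet_indep : LinearIndependent F (fun μ : stdSet I m => vmon I ↑μ) := by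
  rw [linearIndependent_iff]
  intro l hl
  by_contra hne
  have hsupp : l.support.Nonempty := Finsupp.support_nonempty_iff.mpr hne
  obtain ⟨μs, hmem, hmax⟩ := l.support.exists_max_image (fun γ => m.toSyn ↑γ) hsupp
  rw [Finsupp.linearCombination_apply, Finsupp.sum, ← Finset.add_sum_erase _ _ hmem] at hl
  have hlμ : l μs ≠ 0 := Finsupp.mem_support_iff.mp hmem
  have hv : vmon I ↑μs =
      ∑ γ ∈ l.support.erase μs, (-(l μs)⁻¹ * l γ) • vmon I ↑γ := by
    have heq := eq_neg_of_add_eq_zero_left hl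
    calc vmon I ↑μs = (l μs)⁻¹ • (l μs • vmon I ↑μs) := by
          rw [smul_smul, inv_mul_cancel₀ hlμ, one_smul]
      _ = (l μs)⁻¹ • (-∑ γ ∈ l.support.erase μs, l γ • vmon I ↑γ) := by rw [heq]
      _ = _ := by
          rw [← Finset.sum_neg_distrib, Finset.smul_sum]
          refine Finset.sum_congr rfl fun γ _ => ?_
          module
  have hspan : vmon I ↑μs ∈
      Submodule.span F (vmon I '' {ν | ν ≺[m] ↑μs}) := by
    rw [hv]
    refine Submodule.sum_mem _ fun γ hγ => Submodule.smul_mem _ _ (Submodule.subset_span ?_)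
    refine ⟨↑γ, ?_, rfl⟩
    have hne' : (γ : Fin d →₀ ℕ) ≠ ↑μs := fun h =>
      (Finset.mem_erase.mp hγ).1 (Subtype.ext h)
    have hle := hmax γ (Finset.mem_of_mem_erase hγ)
    exact lt_of_le_of_ne hle (fun h => hne' (m.toSyn.injective h))
  exact μs.2 hspan

lemma stdSet_reach (μ : Fin d →₀ ℕ) :
    vmon I μ ∈ Submodule.span F
      (vmon I '' {γ | γ ∈ stdSet I m ∧ m.toSyn γ ≤ m.toSyn μ}) := by
  induction μ using (InvImage.wf m.toSyn m.wf.wf).induction with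
  | _ μ ih =>
    by_cases hμ : μ ∈ stdSet I m
    · exact Submodule.subset_span ⟨μ, ⟨hμ, le_rfl⟩, rfl⟩
    · simp only [stdSet, Set.mem_setOf_eq, not_not] at hμ
      refine Submodule.span_le.mpr ?_ hμ
      rintro x ⟨ν, hν, rfl⟩
      simp only [Set.mem_setOf_eq] at hν
      refine Submodule.span_le.mpr ?_ (ih ν hν)
      rintro x ⟨γ, hγ, rfl⟩
      exact Submodule.subset_span ⟨γ, ⟨hγ.1, hγ.2.trans hν.le⟩, rfl⟩

lemma stdSet_span :
    Submodule.span F (Set.range fun μ : stdSet I m => vmon I ↑μ) = ⊤ := by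
  rw [eq_top_iff, ← span_vmon_top I, Submodule.span_le]
  rintro x ⟨μ, rfl⟩
  refine Submodule.span_le.mpr ?_ (stdSet_reach I m μ)
  rintro x ⟨γ, hγ, rfl⟩
  exact Submodule.subset_span ⟨⟨γ, hγ.1⟩, rfl⟩

lemma stdSet_isMOQB [FiniteDimensional F (MvPolynomial (Fin d) F ⧸ I)] :
    IsMOQB I (stdSet I m) := by
  refine ⟨?_, stdSet_lower I m, stdSet_indep I m, stdSet_span I m⟩
  rw [← Set.finite_coe_iff]
  exact (stdSet_indep I m).finite

end Aux

section Ord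

/-- A monomial order on `Fin d →₀ ℕ` that makes the `i`-th coordinate dominant. -/
noncomputable def ordi {d : ℕ} (i : Fin d) : MonomialOrder (Fin d) where
  syn := Lex (Fin d →₀ ℕ)
  toSyn :=
    (Finsupp.domCongr (Equiv.swap (⟨0, i.pos⟩ : Fin d) i)).trans
      { toEquiv := toLex, map_add' := toLex_add }
  toSyn_monotone := by
    intro a b hab
    refine Finsupp.toLex_monotone ?_
    intro j
    exact hab _

lemma ordi_lt {d : ℕ} (i : Fin d) {μ ν : Fin d →₀ ℕ} (h : μ i < ν i) :
    (ordi i).toSyn μ < (ordi i).toSyn ν := by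
  have key : ∃ k, (∀ j, j < k →
        (Finsupp.equivMapDomain (Equiv.swap (⟨0, i.pos⟩ : Fin d) i) μ) j =
        (Finsupp.equivMapDomain (Equiv.swap (⟨0, i.pos⟩ : Fin d) i) ν) j) ∧
      (Finsupp.equivMapDomain (Equiv.swap (⟨0, i.pos⟩ : Fin d) i) μ) k <
        (Finsupp.equivMapDomain (Equiv.swap (⟨0, i.pos⟩ : Fin d) i) ν) k := by
    refine ⟨⟨0, i.pos⟩, fun j hj => absurd hj (by simp [Fin.lt_def]), ?_⟩
    simpa [Finsupp.equivMapDomain_apply, Equiv.symm_swap, Equiv.swap_apply_left] using h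
  exact Finsupp.Lex.lt_iff.mpr key

end Ord

/-- Proposition 3.1. Let `I` be a zero-dimensional ideal and `O` a monomial
order quotient basis for `I`. Then `O` is the unique monomial order quotient basis for `I` iff
for every `x^α` in the corner `C[O]`, the monomials `{x^β : 0 ≤ β ≤ α}` are linearly dependent
modulo `I`. -/
theorem stmt1 {F : Type*} [Field F] [CharZero F] {d : ℕ}
    (I : Ideal (MvPolynomial (Fin d) F))
    (hzero : FiniteDimensional F (MvPolynomial (Fin d) F ⧸ I))
    (O : Set (Fin d →₀ ℕ)) (hO : IsMOQB I O) :
    (∀ O' : Set (Fin d →₀ ℕ), IsMOQB I O' → O' = O) ↔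
      ∀ α ∈ corner O,
        ¬ LinearIndependent F (fun β : {β : Fin d →₀ ℕ // β ≤ α} =>
            Ideal.Quotient.mk I (monomial (β : Fin d →₀ ℕ) (1 : F))) := by
  obtain ⟨hOfin, hOlow, hOind0, hOspan0⟩ := hO
  have hOind : LinearIndependent F (fun t : O => vmon I ↑t) := hOind0
  have hOspan : Submodule.span F (Set.range fun t : O => vmon I ↑t) = ⊤ := hOspan0
  constructor
  · intro huniq α hα hind0
    have hind : LinearIndependent F (fun β : {β : Fin d →₀ ℕ // β ≤ α} => vmon I ↑β) := hind0
    have hmem : vmon I α ∈ Submodule.span F (Set.range fun t : O => vmon I ↑t) := by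
      rw [hOspan]; trivial
    obtain ⟨c, hc⟩ := Finsupp.mem_span_range_iff_exists_finsupp.mp hmem
    have hkey : ∀ γ ∈ c.support, (γ : Fin d →₀ ℕ) ≤ α := by
      intro γ hγ
      by_contra hγle
      obtain ⟨i, hi⟩ : ∃ i, α i < (γ : Fin d →₀ ℕ) i := by
        simp only [Finsupp.le_def, not_forall, not_le] at hγle
        exact hγle
      have hstd := huniq (stdSet I (ordi i)) (stdSet_isMOQB I (ordi i))
      have hreach := stdSet_reach I (ordi i) α
      rw [hstd] at hreach
      have hmem2 : vmon I α ∈ Submodule.span F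
          ((fun t : O => vmon I ↑t) ''
            {t : O | (ordi i).toSyn ↑t ≤ (ordi i).toSyn α}) := by
        refine Submodule.span_le.mpr ?_ hreach
        rintro x ⟨γ', hγ', rfl⟩
        exact Submodule.subset_span ⟨⟨γ', hγ'.1⟩, hγ'.2, rfl⟩
      obtain ⟨l, hlsupp, hl⟩ :=
        (Finsupp.mem_span_image_iff_linearCombination F).mp hmem2
      have hc' : Finsupp.linearCombination F (fun t : O => vmon I ↑t) c = vmon I α := by
        rw [Finsupp.linearCombination_apply]; exact hc
      have hcl : c = l := by
        have h0 := linearIndependent_iff.mp hOind (c - l) (by rw [map_sub, hc', hl, sub_self])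
        exact sub_eq_zero.mp h0
      have hγl : γ ∈ l.support := by rw [← hcl]; exact hγ
      have hγs : (ordi i).toSyn (γ : Fin d →₀ ℕ) ≤ (ordi i).toSyn α :=
        (Finsupp.mem_supported F l).mp hlsupp (Finset.mem_coe.mpr hγl)
      exact absurd hγs (not_le.mpr (ordi_lt i hi))
    -- contradiction with independence of the divisors of α
    set x : {β : Fin d →₀ ℕ // β ≤ α} := ⟨α, le_rfl⟩ with hx
    have hnot := hind.notMem_span_image (s := {y : {β : Fin d →₀ ℕ // β ≤ α} | y ≠ x})
      (x := x) (by simp)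
    refine hnot ?_
    have : vmon I α ∈ Submodule.span F
        ((fun β : {β : Fin d →₀ ℕ // β ≤ α} => vmon I ↑β) ''
          {y : {β : Fin d →₀ ℕ // β ≤ α} | y ≠ x}) := by
      rw [← hc, Finsupp.sum]
      refine Submodule.sum_mem _ fun γ hγ => Submodule.smul_mem _ _ (Submodule.subset_span ?_)
      have h1 : (γ : Fin d →₀ ℕ) ≤ α := hkey γ hγ
      have h2 : (γ : Fin d →₀ ℕ) ≠ α := fun h => hα.1 (h ▸ (γ : O).2)
      exact ⟨⟨↑γ, h1⟩, fun h => h2 (congrArg Subtype.val h), rfl⟩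
    exact this
  · intro hdep O' hO'
    obtain ⟨hfin', hlow', hind0', hspan0'⟩ := hO'
    have hind' : LinearIndependent F (fun t : O' => vmon I ↑t) := hind0'
    have hsub : O' ⊆ O := by
      by_contra hns
      obtain ⟨α0, hα0a, hα0b⟩ := Set.not_subset.mp hns
      have hne : (O' \ O).Nonempty := ⟨α0, hα0a, hα0b⟩
      set m : MonomialOrder (Fin d) := MonomialOrder.lex with hm
      obtain ⟨α, hαS, hαmin⟩ :=
        (InvImage.wf m.toSyn m.wf.wf).has_min (O' \ O) hne
      have hαO' : α ∈ O' := hαS.1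
      have hαO : α ∉ O := hαS.2
      have hcorner : α ∈ corner O := by
        refine ⟨hαO, fun i hi => ?_⟩
        set β := α - Finsupp.single i 1 with hβ
        have hble : β ≤ α := tsub_le_self
        have hbne : β ≠ α := by
          intro h
          have h2 : β i = α i := by rw [h]
          rw [hβ, Finsupp.tsub_apply, Finsupp.single_eq_same] at h2
          omega
        have hβO' : β ∈ O' := hlow' hble hαO'
        by_contra hβO
        refine hαmin β ⟨hβO', hβO⟩ ?_
        exact lt_of_le_of_ne (m.toSyn_monotone hble) (fun h => hbne (m.toSyn.injective h))
      refine hdep α hcorner ?_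
      have hmono : ∀ β : {β : Fin d →₀ ℕ // β ≤ α}, (β : Fin d →₀ ℕ) ∈ O' :=
        fun β => hlow' β.2 hαO'
      exact hind0'.comp (fun β : {β : Fin d →₀ ℕ // β ≤ α} => (⟨↑β, hmono β⟩ : O'))
        (by intro a b hab; simpa [Subtype.ext_iff] using hab)
    have b : Module.Basis O F (MvPolynomial (Fin d) F ⧸ I) := Module.Basis.mk hOind0 (by rw [hOspan0])
    have b' : Module.Basis O' F (MvPolynomial (Fin d) F ⧸ I) := Module.Basis.mk hind0' (by rw [hspan0'])
    have hmk : Cardinal.mk O' = Cardinal.mk O := mk_eq_mk_of_basis' b' b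
    have hcard : O'.ncard = O.ncard := by
      rw [← Nat.card_coe_set_eq, ← Nat.card_coe_set_eq]
      unfold Nat.card
      rw [hmk]
    exact Set.eq_of_subset_of_ncard_le hsub hcard.ge hOfin
end

section
/- Let I ⊂ F[x_1,...,x_d] be a zero-dimensional ideal, let O be a monomial order quotient basis for I, and suppose that for each 1 ≤ i ≤ d there is an elimination order ≺_i for x_i with Gröbner éscalier N_{≺_i}(I) = O. Then for every monomial x^α in the corner C[O], the set {x^β : 0 ≤ β ≤ α componentwise} is linearly dependent modulo I. -/
open MvPolynomial

/-- A monomial order on exponent vectors `Fin d →₀ ℕ`: a linear order in which `0` (i.e. the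
monomial `1`) is least and which is compatible with addition of exponents (multiplication of
monomials). -/
structure MonOrder (d : ℕ) where
  toLinearOrder : LinearOrder (Fin d →₀ ℕ)
  zero_le : ∀ a, toLinearOrder.le 0 a
  add_le_add : ∀ a b c, toLinearOrder.le a b → toLinearOrder.le (a + c) (b + c)

/-- `α` is the exponent of the leading monomial of `f` w.r.t. the monomial order `o`. -/
def MonOrder.IsLM {d : ℕ} {F : Type*} [CommSemiring F] (o : MonOrder d)
    (f : MvPolynomial (Fin d) F) (α : Fin d →₀ ℕ) : Prop :=
  α ∈ f.support ∧ ∀ β ∈ f.support, o.toLinearOrder.le β α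
/-- `o` is an elimination order for the variable `x_i`: `x_i` is greater than every monomial
in the remaining variables. -/
def MonOrder.IsElimFor {d : ℕ} (o : MonOrder d) (i : Fin d) : Prop :=
  ∀ β : Fin d →₀ ℕ, β i = 0 → o.toLinearOrder.lt β (Finsupp.single i 1)
/-- The Gröbner éscalier of an ideal `I` w.r.t. a monomial order `o`: the monomials (exponent
vectors) not divisible by the leading monomial of any nonzero element of `I`. -/
def escalier {d : ℕ} {F : Type*} [CommSemiring F] (o : MonOrder d)
    (I : Ideal (MvPolynomial (Fin d) F)) : Set (Fin d →₀ ℕ) :=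
  {m | ∀ f ∈ I, f ≠ 0 → ∀ α, o.IsLM f α → ¬ α ≤ m}
lemma MonOrder.exists_isLM {d : ℕ} {F : Type*} [CommSemiring F] (o : MonOrder d)
    {f : MvPolynomial (Fin d) F} (hf : f ≠ 0) : ∃ α, o.IsLM f α := by
  letI := o.toLinearOrder
  obtain ⟨b, hb, h⟩ := f.support.exists_max_image id (MvPolynomial.support_nonempty.2 hf)
  exact ⟨b, hb, h⟩

lemma MonOrder.le_of_add_le_add {d : ℕ} (o : MonOrder d) {a b c : Fin d →₀ ℕ}
    (h : o.toLinearOrder.le (a + c) (b + c)) : o.toLinearOrder.le a b := by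
  rcases o.toLinearOrder.le_total a b with h' | h'
  · exact h'
  · have h2 := o.add_le_add b a c h'
    have := o.toLinearOrder.le_antisymm _ _ h h2
    have : a = b := add_right_cancel this
    exact this ▸ o.toLinearOrder.le_refl a

lemma MonOrder.coord_le {d : ℕ} (o : MonOrder d) {i : Fin d} (helim : o.IsElimFor i)
    {α β : Fin d →₀ ℕ} (h : o.toLinearOrder.le β α) : β i ≤ α i := by
  by_contra h'
  push_neg at h'
  set μ : Fin d →₀ ℕ := β - (β - α) with hμ
  have hβ : (β - μ) + μ = β := by
    ext j; simp only [Finsupp.add_apply, Finsupp.tsub_apply, hμ]; omega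
  have hα : (α - μ) + μ = α := by
    ext j; simp only [Finsupp.add_apply, Finsupp.tsub_apply, hμ]; omega
  have h2 : o.toLinearOrder.le (β - μ) (α - μ) :=
    o.le_of_add_le_add (by rw [hβ, hα]; exact h)
  have hαμi : (α - μ) i = 0 := by
    simp only [hμ, Finsupp.tsub_apply]; omega
  have hβμi : 1 ≤ (β - μ) i := by
    simp only [hμ, Finsupp.tsub_apply]; omega
  have hsingle : o.toLinearOrder.le (Finsupp.single i 1) (β - μ) := by
    have h0 := o.add_le_add 0 ((β - μ) - Finsupp.single i 1) (Finsupp.single i 1)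
      (o.zero_le _)
    have heq : ((β - μ) - Finsupp.single i 1) + Finsupp.single i 1 = β - μ := by
      ext j
      simp only [Finsupp.add_apply, Finsupp.tsub_apply, Finsupp.single_apply]
      rcases eq_or_ne i j with hj | hj
      · subst hj; simp only [if_pos rfl, if_true, eq_self_iff_true, Finsupp.tsub_apply] at hβμi ⊢; omega
      · simp [hj]
    rw [zero_add, heq] at h0
    exact h0
  have hlt := helim (α - μ) hαμi
  have h3 := o.toLinearOrder.le_trans _ _ _ hsingle h2
  rw [o.toLinearOrder.lt_iff_le_not_ge] at hlt
  exact hlt.2 h3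

/-- Let `I` be a zero-dimensional ideal, `O` a monomial order quotient basis
for `I`, and suppose for each `i` there is an elimination order `≺ᵢ` for `xᵢ` whose Gröbner
éscalier is `O`. Then for every `x^α` in the corner `C[O]`, the monomials `{x^β : 0 ≤ β ≤ α}`
are linearly dependent modulo `I`. -/
theorem stmt2 {F : Type*} [Field F] [CharZero F] {d : ℕ}
    (I : Ideal (MvPolynomial (Fin d) F))
    (hzero : FiniteDimensional F (MvPolynomial (Fin d) F ⧸ I))
    (O : Set (Fin d →₀ ℕ)) (hO : IsMOQB I O)
    (e : Fin d → MonOrder d) (helim : ∀ i : Fin d, (e i).IsElimFor i)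
    (hesc : ∀ i : Fin d, escalier (e i) I = O) :
    ∀ α ∈ corner O,
      ¬ LinearIndependent F (fun β : {β : Fin d →₀ ℕ // β ≤ α} =>
          Ideal.Quotient.mk I (monomial (β : Fin d →₀ ℕ) (1 : F))) := by
  classical
  intro α hα hLI
  obtain ⟨hαO, hcorner⟩ := hα
  obtain ⟨hfin, hlower, hind, hspan⟩ := hO
  have hmem : Ideal.Quotient.mk I (monomial α (1:F)) ∈ Submodule.span F
      (Set.range fun t : O => Ideal.Quotient.mk I (monomial (t : Fin d →₀ ℕ) (1 : F))) := by
    rw [hspan]; trivial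
  rw [Finsupp.mem_span_range_iff_exists_finsupp] at hmem
  obtain ⟨c, hc⟩ := hmem
  set f : MvPolynomial (Fin d) F :=
    monomial α (1:F) - c.sum (fun t a => monomial (t : Fin d →₀ ℕ) a) with hf
  have hcoeff : ∀ γ, coeff γ f =
      (if α = γ then (1:F) else 0) - ∑ t ∈ c.support, (if (t : Fin d →₀ ℕ) = γ then c t else 0) := by
    intro γ
    rw [hf, coeff_sub, coeff_monomial, Finsupp.sum, coeff_sum]
    simp only [coeff_monomial]
  have hcoeff_notO : ∀ γ, γ ∉ O → coeff γ f = if α = γ then (1:F) else 0 := by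
    intro γ hγ
    rw [hcoeff, Finset.sum_eq_zero, sub_zero]
    intro t ht
    rw [if_neg]
    intro h
    exact hγ (h ▸ t.2)
  have hcα : coeff α f = 1 := by rw [hcoeff_notO α hαO, if_pos rfl]
  have hfne : f ≠ 0 := fun h => by simp [h] at hcα
  have hfI : f ∈ I := by
    rw [← Ideal.Quotient.eq_zero_iff_mem, hf, map_sub]
    have h2 : Ideal.Quotient.mk I (c.sum fun t a => monomial (t : Fin d →₀ ℕ) a)
        = c.sum fun t a => a • Ideal.Quotient.mk I (monomial (t : Fin d →₀ ℕ) (1:F)) := by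
      rw [Finsupp.sum, map_sum, Finsupp.sum]
      refine Finset.sum_congr rfl fun t ht => ?_
      rw [show (monomial (t : Fin d →₀ ℕ) (c t)) = c t • monomial (t : Fin d →₀ ℕ) (1:F) by
        rw [smul_monomial, smul_eq_mul, mul_one]]
      exact map_smul (Ideal.Quotient.mkₐ F I) _ _
    rw [h2, hc, sub_self]
  have hsupp : ∀ γ ∈ f.support, γ = α ∨ γ ∈ O := by
    intro γ hγ
    by_contra h
    push_neg at h
    obtain ⟨h1, h2⟩ := h
    have h3 := hcoeff_notO γ h2
    rw [if_neg (fun hh => h1 hh.symm)] at h3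
    exact (mem_support_iff.1 hγ) h3
  have hle : ∀ γ ∈ f.support, γ ≤ α := by
    intro γ hγ
    rw [Finsupp.le_def]
    intro j
    obtain ⟨δ, hδ⟩ := (e j).exists_isLM hfne
    have hδα : δ = α := by
      rcases hsupp δ hδ.1 with h | h
      · exact h
      · exfalso
        have hδesc : δ ∈ escalier (e j) I := (hesc j).symm ▸ h
        exact hδesc f hfI hfne δ hδ le_rfl
    have h4 := hδ.2 γ hγ
    rw [hδα] at h4
    exact (e j).coord_le (helim j) h4
  have hαs : α ∈ f.support := mem_support_iff.2 (by rw [hcα]; exact one_ne_zero)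
  set s : Finset {β : Fin d →₀ ℕ // β ≤ α} :=
    f.support.attach.image (fun γ => ⟨γ.1, hle γ.1 γ.2⟩) with hs
  have hsum : ∑ β ∈ s, coeff (β : Fin d →₀ ℕ) f •
      Ideal.Quotient.mk I (monomial (β : Fin d →₀ ℕ) (1:F)) = 0 := by
    have hinj : ∀ x ∈ f.support.attach, ∀ y ∈ f.support.attach,
        (⟨x.1, hle x.1 x.2⟩ : {β : Fin d →₀ ℕ // β ≤ α}) = ⟨y.1, hle y.1 y.2⟩ → x = y :=
      by intro x _ y _ h; exact Subtype.ext (Subtype.mk_eq_mk.1 h)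
    rw [hs, Finset.sum_image hinj]
    rw [Finset.sum_attach f.support (fun γ => coeff γ f • Ideal.Quotient.mk I (monomial γ (1:F)))]
    have h5 : ∀ γ ∈ f.support, coeff γ f • Ideal.Quotient.mk I (monomial γ (1:F))
        = Ideal.Quotient.mk I (monomial γ (coeff γ f)) := by
      intro γ _
      rw [show (monomial γ (coeff γ f)) = coeff γ f • monomial γ (1:F) by
        rw [smul_monomial, smul_eq_mul, mul_one]]
      exact (map_smul (Ideal.Quotient.mkₐ F I) _ _).symm
    rw [Finset.sum_congr rfl h5, ← map_sum, ← f.as_sum, Ideal.Quotient.eq_zero_iff_mem]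
    exact hfI
  have hz := linearIndependent_iff'.1 hLI s (fun β => coeff (β : Fin d →₀ ℕ) f) hsum
    ⟨α, le_refl α⟩ (by rw [hs]; exact Finset.mem_image.2 ⟨⟨α, hαs⟩, Finset.mem_attach _ _, rfl⟩)
  simp only [hcα] at hz
  exact one_ne_zero hz
end

section
/- Let I ⊂ F[x_1,...,x_d] be a zero-dimensional ideal, and for each 1 ≤ i ≤ d let ≺_i be an elimination order for x_i and let G_i be the reduced Gröbner basis of I with respect to ≺_i. If the leading monomial sets LM_{≺_1}(G_1), ..., LM_{≺_d}(G_d) are all identical, then I has a unique reduced Gröbner basis, independent of the monomial order; that is, the reduced Gröbner bases of I with respect to any two monomial orders coincide. -/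
open MvPolynomial

/-- The set of leading monomials (exponents) of (nonzero) elements of `G`. -/
def LMset {d : ℕ} {F : Type*} [CommSemiring F] (o : MonOrder d)
    (G : Set (MvPolynomial (Fin d) F)) : Set (Fin d →₀ ℕ) :=
  {α | ∃ g ∈ G, o.IsLM g α}

/-- `G` is the reduced Gröbner basis of `I` w.r.t. the monomial order `o`: `G` is a finite set
of monic nonzero elements of `I` whose leading monomials minimally generate the monomial ideal
generated by the leading monomials of nonzero elements of `I`, and no monomial appearing in some
`g ∈ G` other than its leading monomial is divisible by the leading monomial of an element
of `G`. -/
def IsReducedGB {d : ℕ} {F : Type*} [Field F] (o : MonOrder d)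
    (I : Ideal (MvPolynomial (Fin d) F)) (G : Set (MvPolynomial (Fin d) F)) : Prop :=
  G.Finite ∧ G ⊆ (I : Set (MvPolynomial (Fin d) F)) ∧ (0 : MvPolynomial (Fin d) F) ∉ G ∧
  (∀ g ∈ G, ∀ α, o.IsLM g α → MvPolynomial.coeff α g = 1) ∧
  (∀ f ∈ I, f ≠ 0 → ∀ α, o.IsLM f α → ∃ g ∈ G, ∃ β, o.IsLM g β ∧ β ≤ α) ∧
  (∀ g ∈ G, ∀ g' ∈ G, g ≠ g' → ∀ β β', o.IsLM g β → o.IsLM g' β' → ¬ β ≤ β') ∧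
  (∀ g ∈ G, ∀ α ∈ g.support, ¬ o.IsLM g α → ∀ g' ∈ G, ∀ β, o.IsLM g' β → ¬ β ≤ α)


namespace MonOrder
variable {d : ℕ}

lemma oLe_of_le (o : MonOrder d) {a b : Fin d →₀ ℕ} (h : a ≤ b) :
    o.toLinearOrder.le a b := by
  obtain ⟨c, rfl⟩ := le_iff_exists_add.mp h
  have := o.add_le_add 0 c a (o.zero_le c)
  simpa [add_comm] using this

lemma oLt_add_right (o : MonOrder d) {a b : Fin d →₀ ℕ}
    (h : o.toLinearOrder.lt a b) (c : Fin d →₀ ℕ) :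
    o.toLinearOrder.lt (a + c) (b + c) := by
  obtain ⟨hab, hnba⟩ := (o.toLinearOrder.lt_iff_le_not_ge a b).mp h
  have hle := o.add_le_add a b c hab
  refine (o.toLinearOrder.lt_iff_le_not_ge _ _).mpr ⟨hle, fun hba => ?_⟩
  have he : a + c = b + c := o.toLinearOrder.le_antisymm _ _ hle hba
  have : a = b := by
    ext i
    have := congrArg (fun f : Fin d →₀ ℕ => f i) he
    simpa using this
  exact hnba (this ▸ o.toLinearOrder.le_refl a)

lemma oLt_of_lt_of_le (o : MonOrder d) {a b c : Fin d →₀ ℕ}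
    (h1 : o.toLinearOrder.lt a b) (h2 : o.toLinearOrder.le b c) :
    o.toLinearOrder.lt a c := by
  obtain ⟨hab, hnba⟩ := (o.toLinearOrder.lt_iff_le_not_ge a b).mp h1
  refine (o.toLinearOrder.lt_iff_le_not_ge _ _).mpr
    ⟨o.toLinearOrder.le_trans _ _ _ hab h2, fun hca => ?_⟩
  exact hnba (o.toLinearOrder.le_trans _ _ _ h2 hca)

lemma not_le_of_lt (o : MonOrder d) {a b : Fin d →₀ ℕ}
    (h : o.toLinearOrder.lt a b) : ¬ o.toLinearOrder.le b a :=
  ((o.toLinearOrder.lt_iff_le_not_ge a b).mp h).2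

/-- In an elimination order for `x i`, any monomial with strictly larger `x i`-degree is
strictly greater. -/
lemma elim_lt (o : MonOrder d) (i : Fin d) (ho : o.IsElimFor i) {α μ : Fin d →₀ ℕ}
    (h : α i < μ i) : o.toLinearOrder.lt α μ := by
  have h1 : o.toLinearOrder.lt (Finsupp.erase i α) (Finsupp.single i 1) :=
    ho _ Finsupp.erase_same
  have h2 := o.oLt_add_right h1 (Finsupp.single i (α i))
  have e1 : Finsupp.erase i α + Finsupp.single i (α i) = α := by
    rw [add_comm]; exact Finsupp.single_add_erase i α
  have e2 : Finsupp.single i 1 + Finsupp.single i (α i) = Finsupp.single i (α i + 1) := by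
    rw [← Finsupp.single_add, Nat.add_comm]
  rw [e1, e2] at h2
  refine o.oLt_of_lt_of_le h2 (o.oLe_of_le ?_)
  rw [Finsupp.le_def]
  intro j
  rcases eq_or_ne i j with rfl | hij
  · simpa using h
  · simp [Finsupp.single_apply, hij]

variable {F : Type*} [CommSemiring F]

lemma exists_isLM_s6 (o : MonOrder d) {f : MvPolynomial (Fin d) F} (hf : f ≠ 0) :
    ∃ α, o.IsLM f α := by
  have hne : f.support.Nonempty :=
    Finset.nonempty_iff_ne_empty.mpr (fun h => hf (MvPolynomial.support_eq_empty.mp h))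
  letI := o.toLinearOrder
  obtain ⟨α, hα, hmax⟩ := f.support.exists_max_image id hne
  exact ⟨α, hα, fun β hβ => hmax β hβ⟩

lemma IsLM.unique {o : MonOrder d} {f : MvPolynomial (Fin d) F} {α β : Fin d →₀ ℕ}
    (h1 : o.IsLM f α) (h2 : o.IsLM f β) : α = β :=
  o.toLinearOrder.le_antisymm _ _ (h2.2 α h1.1) (h1.2 β h2.1)

end MonOrder

section GB
variable {d : ℕ} {F : Type*} [Field F] {I : Ideal (MvPolynomial (Fin d) F)}

/-- Two elements of reduced Gröbner bases (possibly w.r.t. different orders) of the same ideal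
with the same leading monomial coincide, provided the two leading-monomial sets agree. -/
lemma point_eq {o o' : MonOrder d} {H H' : Set (MvPolynomial (Fin d) F)}
    (hH : IsReducedGB o I H) (hH' : IsReducedGB o' I H')
    (hS : LMset o H = LMset o' H') {g g' : MvPolynomial (Fin d) F} {α : Fin d →₀ ℕ}
    (hg : g ∈ H) (hg' : g' ∈ H') (ha : o.IsLM g α) (ha' : o'.IsLM g' α) : g = g' := by
  obtain ⟨-, hHI, hH0, hmonic, hdiv, -, hred⟩ := hH
  obtain ⟨-, hHI', hH0', hmonic', -, -, hred'⟩ := hH'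
  by_contra hne
  have hf0 : g - g' ≠ 0 := sub_ne_zero.mpr hne
  have hfI : g - g' ∈ I := I.sub_mem (hHI hg) (hHI' hg')
  obtain ⟨τ, hτ⟩ := MonOrder.exists_isLM_s6 o hf0
  obtain ⟨h, hh, β, hβ, hβτ⟩ := hdiv _ hfI hf0 τ hτ
  have hτne : τ ≠ α := by
    intro hτα
    have hcoeff : MvPolynomial.coeff τ (g - g') ≠ 0 := MvPolynomial.mem_support_iff.mp hτ.1
    rw [hτα, MvPolynomial.coeff_sub, hmonic g hg α ha, hmonic' g' hg' α ha'] at hcoeff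
    simp at hcoeff
  have hτmem : τ ∈ g.support ∪ g'.support := MvPolynomial.support_sub _ _ _ hτ.1
  rcases Finset.mem_union.mp hτmem with h1 | h2
  · exact hred g hg τ h1 (fun hLM => hτne (hLM.unique ha)) h hh β hβ hβτ
  · have hβmem : β ∈ LMset o' H' := hS ▸ ⟨h, hh, hβ⟩
    obtain ⟨h'', hh'', hβ''⟩ := hβmem
    exact hred' g' hg' τ h2 (fun hLM => hτne (hLM.unique ha')) h'' hh'' β hβ'' hβτ

lemma GB_sub {o o' : MonOrder d} {H H' : Set (MvPolynomial (Fin d) F)}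
    (hH : IsReducedGB o I H) (hH' : IsReducedGB o' I H')
    (hS : LMset o H = LMset o' H') : H ⊆ H' := by
  intro g hg
  have hg0 : g ≠ 0 := fun h => hH.2.2.1 (h ▸ hg)
  obtain ⟨α, hα⟩ := MonOrder.exists_isLM_s6 o hg0
  have hmem : α ∈ LMset o' H' := hS ▸ ⟨g, hg, hα⟩
  obtain ⟨g', hg', hα'⟩ := hmem
  exact (point_eq hH hH' hS hg hg' hα hα') ▸ hg'

/-- Reduced Gröbner bases with equal leading-monomial sets coincide. -/
lemma GB_eq {o o' : MonOrder d} {H H' : Set (MvPolynomial (Fin d) F)}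
    (hH : IsReducedGB o I H) (hH' : IsReducedGB o' I H')
    (hS : LMset o H = LMset o' H') : H = H' :=
  Set.Subset.antisymm (GB_sub hH hH' hS) (GB_sub hH' hH hS.symm)

end GB

/-- Corollary 3.1. Let `I` be a zero-dimensional ideal and, for each `i`, let
`≺ᵢ` be an elimination order for `xᵢ` and `Gᵢ` the reduced Gröbner basis of `I` w.r.t. `≺ᵢ`.
If the leading-monomial sets `LM_≺ᵢ(Gᵢ)` are all identical, then `I` has a unique reduced
Gröbner basis, independent of the monomial order. -/
theorem stmt6 {F : Type*} [Field F] [CharZero F] {d : ℕ}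
    (I : Ideal (MvPolynomial (Fin d) F))
    (hzero : FiniteDimensional F (MvPolynomial (Fin d) F ⧸ I))
    (e : Fin d → MonOrder d) (helim : ∀ i : Fin d, (e i).IsElimFor i)
    (G : Fin d → Set (MvPolynomial (Fin d) F)) (hG : ∀ i, IsReducedGB (e i) I (G i))
    (hLM : ∀ i j : Fin d, LMset (e i) (G i) = LMset (e j) (G j)) :
    ∀ (o o' : MonOrder d) (H H' : Set (MvPolynomial (Fin d) F)),
      IsReducedGB o I H → IsReducedGB o' I H' → H = H' := by
  intro o o' H H' hH hH'
  rcases Nat.eq_zero_or_pos d with hd | hd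
  · -- degenerate case `d = 0`: there is only one monomial, namely `1`
    subst hd
    have hsub : ∀ β : Fin 0 →₀ ℕ, β = 0 := fun β => Finsupp.ext fun i => i.elim0
    refine GB_eq hH hH' ?_
    have key : ∀ (o₁ o₂ : MonOrder 0) (H₁ H₂ : Set (MvPolynomial (Fin 0) F)),
        IsReducedGB o₁ I H₁ → IsReducedGB o₂ I H₂ → LMset o₁ H₁ ⊆ LMset o₂ H₂ := by
      rintro o₁ o₂ H₁ H₂ h₁ h₂ β ⟨h, hh, hLM⟩
      have hh0 : h ≠ 0 := fun hz => h₁.2.2.1 (hz ▸ hh)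
      obtain ⟨τ, hτ⟩ := MonOrder.exists_isLM_s6 o₂ hh0
      obtain ⟨g', hg', β', hβ', -⟩ := h₂.2.2.2.2.1 h (h₁.2.1 hh) hh0 τ hτ
      have : β = β' := (hsub β).trans (hsub β').symm
      exact ⟨g', hg', this ▸ hβ'⟩
    exact Set.Subset.antisymm (key o o' H H' hH hH') (key o' o H' H hH' hH)
  · -- main case `d ≥ 1`
    set i0 : Fin d := ⟨0, hd⟩ with hi0
    -- Step 1–3: each element of `G i0` has the same leading monomial w.r.t. every order
    have key3 : ∀ g ∈ G i0, ∀ α, (e i0).IsLM g α → ∀ o'' : MonOrder d, o''.IsLM g α := by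
      intro g hg α hα o''
      have step1 : ∀ i, (e i).IsLM g α := by
        intro i
        have hmem : α ∈ LMset (e i) (G i) := (hLM i0 i) ▸ ⟨g, hg, hα⟩
        obtain ⟨g'', hg'', hα''⟩ := hmem
        have heq : g = g'' := point_eq (hG i0) (hG i) (hLM i0 i) hg hg'' hα hα''
        exact heq ▸ hα''
      have step2 : ∀ μ ∈ g.support, μ ≤ α := by
        intro μ hμ
        by_contra hle
        rw [Finsupp.le_def] at hle
        push_neg at hle
        obtain ⟨i, hi⟩ := hle
        exact MonOrder.not_le_of_lt (e i) (MonOrder.elim_lt (e i) i (helim i) hi)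
          ((step1 i).2 μ hμ)
      exact ⟨hα.1, fun β hβ => o''.oLe_of_le (step2 β hβ)⟩
    -- Step 4: every reduced Gröbner basis has leading-monomial set `LMset (e i0) (G i0)`
    have step4 : ∀ (o'' : MonOrder d) (H'' : Set (MvPolynomial (Fin d) F)),
        IsReducedGB o'' I H'' → LMset o'' H'' = LMset (e i0) (G i0) := by
      intro o'' H'' hH''
      obtain ⟨-, hI'', h0'', hmon'', hdiv'', hmin'', hred''⟩ := hH''
      obtain ⟨-, hI0, h00, hmon0, hdiv0, hmin0, hred0⟩ := hG i0
      have hsub : LMset o'' H'' ⊆ LMset (e i0) (G i0) := by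
        rintro β ⟨h, hh, hβ⟩
        have hh0 : h ≠ 0 := fun hz => h0'' (hz ▸ hh)
        obtain ⟨τ, hτ⟩ := MonOrder.exists_isLM_s6 (e i0) hh0
        obtain ⟨g, hg, α, hαg, hατ⟩ := hdiv0 _ (hI'' hh) hh0 τ hτ
        have hgo : o''.IsLM g α := key3 g hg α hαg o''
        have hg0 : g ≠ 0 := fun hz => h00 (hz ▸ hg)
        obtain ⟨h', hh', β', hβ', hβ'α⟩ := hdiv'' g (hI0 hg) hg0 α hgo
        have hβ'τ : β' ≤ τ := le_trans hβ'α hατ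
        have hτβ : τ = β := by
          by_contra hne
          exact hred'' h hh τ hτ.1 (fun hLM => hne (hLM.unique hβ)) h' hh' β' hβ' hβ'τ
        rw [hτβ] at hατ hβ'τ
        have hhh : h' = h := by
          by_contra hne'
          exact hmin'' h' hh' h hh hne' β' β hβ' hβ hβ'τ
        have hββ' : β' = β := MonOrder.IsLM.unique (hhh ▸ hβ') hβ
        have hαβ : α = β := le_antisymm hατ (hββ' ▸ hβ'α)
        exact ⟨g, hg, hαβ ▸ hαg⟩
      refine Set.Subset.antisymm hsub ?_
      rintro α ⟨g, hg, hα⟩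
      have hgo : o''.IsLM g α := key3 g hg α hα o''
      have hg0 : g ≠ 0 := fun hz => h00 (hz ▸ hg)
      obtain ⟨h, hh, β, hβ, hβα⟩ := hdiv'' g (hI0 hg) hg0 α hgo
      obtain ⟨g', hg', hβ'⟩ := hsub ⟨h, hh, hβ⟩
      have hgg' : g' = g := by
        by_contra hne
        exact hmin0 g' hg' g hg hne β α hβ' hα hβα
      have hβeq : β = α := MonOrder.IsLM.unique (hgg' ▸ hβ') hα
      exact ⟨h, hh, hβeq ▸ hβ⟩
    exact GB_eq hH hH' ((step4 o H hH).trans (step4 o' H' hH').symm)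
end

section
/- Let Ξ ⊂ F^d, d ≥ 2, be a finite set of distinct points, and for each 1 ≤ i ≤ d let v_{i,0},...,v_{i,m_i} be the distinct values of the i-th coordinates of points of Ξ, and for 0 ≤ j ≤ m_i let L_{i,j}(Ξ) ⊂ F^{d-1} be the set of (d−1)-tuples obtained by deleting the i-th coordinate from those points of Ξ whose i-th coordinate equals v_{i,j}. Then Ξ is a Cartesian set if and only if for each 1 ≤ i ≤ d the values v_{i,0},...,v_{i,m_i} can be ordered so that L_{i,0}(Ξ) ⊇ L_{i,1}(Ξ) ⊇ ... ⊇ L_{i,m_i}(Ξ). -/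
open MvPolynomial

/-- `Ξ` is the `A`-Cartesian set determined by the lower set `A ⊆ ℕ^d` and the injective
functions `y i : ℕ → F`. -/
def IsCartesianWith {d : ℕ} {F : Type*} (A : Set (Fin d → ℕ)) (y : Fin d → ℕ → F)
    (Ξ : Set (Fin d → F)) : Prop :=
  IsLowerSet A ∧ (∀ i, Function.Injective (y i)) ∧
  Ξ = (fun α : Fin d → ℕ => fun i => y i (α i)) '' A

/-- `Ξ` is a Cartesian set. -/
def IsCartesian {d : ℕ} {F : Type*} (Ξ : Set (Fin d → F)) : Prop :=
  ∃ (A : Set (Fin d → ℕ)) (y : Fin d → ℕ → F), IsCartesianWith A y Ξ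

/-- Theorem 3.2. A finite set of distinct points `Ξ ⊆ F^d` (`d = n+1 ≥ 2`) is
Cartesian iff for each coordinate direction `i`, the slices of `Ξ` (the sets of `(d-1)`-tuples
obtained by deleting the `i`-th coordinate from the points of `Ξ` with a fixed `i`-th coordinate
value) are totally ordered by inclusion, i.e. can be ordered decreasingly
`L_{i,0}(Ξ) ⊇ ⋯ ⊇ L_{i,mᵢ}(Ξ)`. -/
theorem stmt7 {F : Type*} [Field F] [CharZero F] {n : ℕ} (hn : 1 ≤ n)
    (Ξ : Set (Fin (n + 1) → F)) (hfin : Ξ.Finite) :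
    IsCartesian Ξ ↔
      ∀ i : Fin (n + 1),
        ∀ v ∈ (fun ξ : Fin (n + 1) → F => ξ i) '' Ξ,
          ∀ w ∈ (fun ξ : Fin (n + 1) → F => ξ i) '' Ξ,
            i.removeNth '' {ξ ∈ Ξ | ξ i = v} ⊆ i.removeNth '' {ξ ∈ Ξ | ξ i = w} ∨
            i.removeNth '' {ξ ∈ Ξ | ξ i = w} ⊆ i.removeNth '' {ξ ∈ Ξ | ξ i = v} := by
  classical
  constructor
  · rintro ⟨A, y, hA, hy, rfl⟩ i v hv w hw
    have key : ∀ j k : ℕ, j ≤ k →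
        i.removeNth '' {ξ ∈ (fun α : Fin (n+1) → ℕ => fun t => y t (α t)) '' A | ξ i = y i k} ⊆
        i.removeNth '' {ξ ∈ (fun α : Fin (n+1) → ℕ => fun t => y t (α t)) '' A | ξ i = y i j} := by
      intro j k hjk x hx
      obtain ⟨ξ, ⟨⟨β, hβ, rfl⟩, hval⟩, rfl⟩ := hx
      have hβi : β i = k := hy i (by simpa using hval)
      have hle : Function.update β i j ≤ β := by
        intro t
        rcases eq_or_ne t i with rfl | ht
        · simpa [hβi] using hjk
        · simp [Function.update_of_ne ht]
      refine ⟨fun t => y t (Function.update β i j t), ⟨⟨Function.update β i j, hA hle hβ, rfl⟩,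
        by simp⟩, ?_⟩
      funext t
      simp [Fin.removeNth, Function.update_of_ne (Fin.succAbove_ne i t)]
    obtain ⟨ξ₁, ⟨α₁, hα₁, rfl⟩, rfl⟩ := hv
    obtain ⟨ξ₂, ⟨α₂, hα₂, rfl⟩, rfl⟩ := hw
    rcases le_total (α₁ i) (α₂ i) with hle | hle
    · exact Or.inr (key _ _ hle)
    · exact Or.inl (key _ _ hle)
  · intro h
    set img : Fin (n+1) → Set F := fun i => (fun ξ : Fin (n+1) → F => ξ i) '' Ξ with himg
    have hVfin : ∀ i, (img i).Finite := fun i => hfin.image _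
    set sl : Fin (n+1) → F → Set (Fin n → F) :=
      fun i v => i.removeNth '' {ξ ∈ Ξ | ξ i = v} with hsl
    have hslfin : ∀ i v, (sl i v).Finite := fun i v =>
      (hfin.subset (Set.sep_subset _ _)).image _
    set r : Fin (n+1) → F → F → Prop := fun i a b => (sl i b).ncard ≤ (sl i a).ncard with hr
    haveI rtot : ∀ i, IsTotal F (r i) := fun i => ⟨fun a b => le_total _ _⟩
    haveI rtrans : ∀ i, IsTrans F (r i) := fun i => ⟨fun a b c h1 h2 => le_trans h2 h1⟩
    set L : (i : Fin (n+1)) → List F :=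
      fun i => List.insertionSort (r i) (hVfin i).toFinset.toList with hLdef
    have hLperm : ∀ i, List.Perm (L i) (hVfin i).toFinset.toList := fun i => List.perm_insertionSort _ _
    have hLsorted : ∀ i, List.Pairwise (r i) (L i) := fun i =>
      haveI := rtot i; haveI := rtrans i; List.pairwise_insertionSort _ _
    have hLnodup : ∀ i, (L i).Nodup := fun i =>
      (hLperm i).nodup_iff.mpr (Finset.nodup_toList _)
    have hLmem : ∀ i a, a ∈ L i ↔ a ∈ img i := fun i a => by
      rw [(hLperm i).mem_iff, Finset.mem_toList, Set.Finite.mem_toFinset]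
    set g : (i : Fin (n+1)) → ℕ ↪ ↥((img i)ᶜ) :=
      fun i => Set.Infinite.natEmbedding _ ((hVfin i).infinite_compl) with hg
    set y : Fin (n+1) → ℕ → F := fun i j =>
      if hj : j < (L i).length then (L i).get ⟨j, hj⟩ else (g i (j - (L i).length) : F) with hydef
    have hyin : ∀ i j (hj : j < (L i).length), y i j = (L i).get ⟨j, hj⟩ := fun i j hj =>
      dif_pos hj
    have hyout : ∀ i j, ¬ j < (L i).length → y i j ∉ img i := by
      intro i j hj
      rw [hydef]; simp only [dif_neg hj]
      exact (g i (j - (L i).length)).2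
    have hyinj : ∀ i, Function.Injective (y i) := by
      intro i a b hab
      by_cases ha : a < (L i).length <;> by_cases hb : b < (L i).length
      · rw [hyin i a ha, hyin i b hb] at hab
        have := List.nodup_iff_injective_get.mp (hLnodup i) hab
        exact congrArg Fin.val this
      · exact absurd ((hLmem i _).mp (hab ▸ (hyin i a ha ▸ List.get_mem _ _)))
          (hyout i b hb)
      · exact absurd ((hLmem i _).mp (hab.symm ▸ (hyin i b hb ▸ List.get_mem _ _)))
          (hyout i a ha)
      · rw [hydef] at hab
        simp only [dif_neg ha, dif_neg hb] at hab
        have := (g i).injective (Subtype.ext hab)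
        omega
    set A : Set (Fin (n+1) → ℕ) := {α | (fun t => y t (α t)) ∈ Ξ} with hAdef
    have hbd : ∀ α ∈ A, ∀ t, α t < (L t).length := by
      intro α hα t
      by_contra hc
      exact hyout t (α t) hc ⟨_, hα, rfl⟩
    have hygen : ∀ i j (hj : j < (L i).length), y i j ∈ img i := fun i j hj => by
      rw [hyin i j hj]
      exact (hLmem i _).mp (List.get_mem _ _)
    have hstep : ∀ α ∈ A, ∀ (i : Fin (n+1)) (j : ℕ), j ≤ α i → Function.update α i j ∈ A := by
      intro α hα i j hj
      rcases eq_or_lt_of_le hj with rfl | hjlt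
      · simpa [Function.update_eq_self] using hα
      have hki : α i < (L i).length := hbd α hα i
      have hjlen : j < (L i).length := lt_trans hjlt hki
      have hv : y i j ∈ img i := hygen i j hjlen
      have hw : y i (α i) ∈ img i := ⟨_, hα, rfl⟩
      have hcard : (sl i (y i (α i))).ncard ≤ (sl i (y i j)).ncard := by
        have := (hLsorted i).rel_get_of_lt (a := ⟨j, hjlen⟩) (b := ⟨α i, hki⟩) hjlt
        rwa [← hyin i j hjlen, ← hyin i (α i) hki] at this
      have hsub : sl i (y i (α i)) ⊆ sl i (y i j) := by
        rcases h i (y i j) hv (y i (α i)) hw with h1 | h1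
        · have := Set.eq_of_subset_of_ncard_le h1 hcard (hslfin i _)
          exact this.symm.subset
        · exact h1
      have hmem : i.removeNth (fun t => y t (α t)) ∈ sl i (y i (α i)) := ⟨_, ⟨hα, rfl⟩, rfl⟩
      obtain ⟨ξ, ⟨hξΞ, hξi⟩, hrem⟩ := hsub hmem
      have hξeq : ξ = fun t => y t (Function.update α i j t) := by
        funext t
        rcases eq_or_ne t i with rfl | ht
        · simpa using hξi
        · obtain ⟨t', rfl⟩ := Fin.exists_succAbove_eq ht
          have := congrFun hrem t'
          simp only [Fin.removeNth] at this
          rw [Function.update_of_ne (Fin.succAbove_ne i t'), this]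
      show (fun t => y t (Function.update α i j t)) ∈ Ξ
      rw [← hξeq]; exact hξΞ
    have hlow : IsLowerSet A := by
      have key : ∀ m (α : Fin (n+1) → ℕ), α ∈ A → ∀ β ≤ α, (∑ t, (α t - β t)) = m → β ∈ A := by
        intro m
        induction m using Nat.strong_induction_on with
        | _ m ih =>
          intro α hα β hβ hm
          by_cases hex : ∃ t, β t < α t
          · obtain ⟨i, hi⟩ := hex
            have hα' : Function.update α i (β i) ∈ A := hstep α hα i (β i) (le_of_lt hi)
            have hβ' : β ≤ Function.update α i (β i) := by
              intro t
              rcases eq_or_ne t i with rfl | ht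
              · simp
              · simp only [Function.update_of_ne ht]; exact hβ t
            have hlt : (∑ t, (Function.update α i (β i) t - β t)) < m := by
              rw [← hm]
              apply Finset.sum_lt_sum
              · intro t _
                rcases eq_or_ne t i with rfl | ht
                · simp
                · simp [Function.update_of_ne ht]
              · exact ⟨i, Finset.mem_univ i, by simp; omega⟩
            exact ih _ hlt _ hα' β hβ' rfl
          · push_neg at hex
            have : β = α := funext fun t => le_antisymm (hβ t) (hex t)
            exact this ▸ hα
      intro a b hba ha
      exact key _ a ha b hba rfl
    refine ⟨A, y, hlow, hyinj, ?_⟩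
    ext ξ
    constructor
    · intro hξ
      have hcoord : ∀ t, ∃ jh : Fin (L t).length, (L t).get jh = ξ t := by
        intro t
        exact List.mem_iff_get.mp ((hLmem t _).mpr ⟨ξ, hξ, rfl⟩)
      choose idx hidx using hcoord
      have heq : (fun t => y t ((idx t : ℕ))) = ξ := by
        funext t
        rw [hyin t (idx t) (idx t).isLt, Fin.eta]
        exact hidx t
      exact ⟨fun t => (idx t : ℕ), show (fun t => y t ((idx t : ℕ))) ∈ Ξ from heq ▸ hξ, heq⟩
    · rintro ⟨α, hα, rfl⟩
      exact hα
end

section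
/- Let Ξ ⊂ F^d be an A-Cartesian set and let N = {x^α : α ∈ A}. Then the vanishing ideal I(Ξ) has a unique monomial order quotient basis, and this unique monomial order quotient basis is N. -/
open MvPolynomial

/-- The vanishing ideal of a point set `Ξ ⊆ F^d`. -/
noncomputable def vanishIdeal {d : ℕ} {F : Type*} [Field F] (Ξ : Set (Fin d → F)) :
    Ideal (MvPolynomial (Fin d) F) :=
  ⨅ ξ ∈ Ξ, RingHom.ker (MvPolynomial.eval ξ)
namespace Stmt10Aux

variable {F : Type*} [Field F] {d : ℕ}

/-- `p` is monic with exponent bound `n`. -/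
def MB (n : Fin d →₀ ℕ) (p : MvPolynomial (Fin d) F) : Prop :=
  (∀ δ ∈ p.support, δ ≤ n) ∧ coeff n p = 1

lemma MB.one : MB (0 : Fin d →₀ ℕ) (1 : MvPolynomial (Fin d) F) := by
  constructor
  · intro δ hδ
    rw [mem_support_iff] at hδ
    by_contra h
    exact hδ (by rw [coeff_one, if_neg (by rintro rfl; exact h le_rfl)])
  · simp

lemma eq_of_le_le_add_eq {a b n m : Fin d →₀ ℕ} (h1 : a ≤ n) (h2 : b ≤ m)
    (h : a + b = n + m) : a = n ∧ b = m := by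
  have hi : ∀ i, a i + b i = n i + m i := by
    intro i
    have := DFunLike.congr_fun h i
    simpa using this
  constructor <;> ext i <;> (have e1 := h1 i; have e2 := h2 i; have e3 := hi i; omega)

lemma MB.mul {n m : Fin d →₀ ℕ} {p q : MvPolynomial (Fin d) F}
    (hp : MB n p) (hq : MB m q) : MB (n + m) (p * q) := by
  classical
  constructor
  · intro δ hδ
    rw [mem_support_iff, coeff_mul] at hδ
    obtain ⟨x, hx, hne⟩ := Finset.exists_ne_zero_of_sum_ne_zero hδ
    rw [Finset.HasAntidiagonal.mem_antidiagonal] at hx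
    have h1 : x.1 ≤ n := hp.1 x.1 (mem_support_iff.2 fun h => hne (by simp [h]))
    have h2 : x.2 ≤ m := hq.1 x.2 (mem_support_iff.2 fun h => hne (by simp [h]))
    rw [← hx]
    exact add_le_add h1 h2
  · rw [coeff_mul, Finset.sum_eq_single (n, m)]
    · simp [hp.2, hq.2]
    · rintro ⟨a, b⟩ hab hne
      rw [Finset.HasAntidiagonal.mem_antidiagonal] at hab
      by_cases ha : a ∈ p.support
      · by_cases hb : b ∈ q.support
        · exact absurd (by
            obtain ⟨h1, h2⟩ := eq_of_le_le_add_eq (hp.1 a ha) (hq.1 b hb) hab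
            rw [h1, h2]) hne
        · rw [notMem_support_iff.1 hb, mul_zero]
      · rw [notMem_support_iff.1 ha, zero_mul]
    · intro h
      simp [Finset.mem_antidiagonal] at h

lemma MB.prod {ι : Type*} (s : Finset ι) (n : ι → (Fin d →₀ ℕ))
    (p : ι → MvPolynomial (Fin d) F) (h : ∀ i ∈ s, MB (n i) (p i)) :
    MB (∑ i ∈ s, n i) (∏ i ∈ s, p i) := by
  classical
  induction s using Finset.cons_induction with
  | empty => simpa using MB.one
  | cons a s ha ih =>
    rw [Finset.prod_cons, Finset.sum_cons]
    exact (h a (by simp)).mul (ih fun i hi => h i (by simp [hi]))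

lemma MB.X_sub_C (i : Fin d) (c : F) :
    MB (Finsupp.single i 1) (X i - C c : MvPolynomial (Fin d) F) := by
  constructor
  · intro δ hδ
    rw [mem_support_iff] at hδ
    by_cases h : δ = Finsupp.single i 1
    · exact h.le
    · by_cases h0 : δ = 0
      · simp [h0]
      · exact absurd (by
          rw [coeff_sub, coeff_X', coeff_C, if_neg (fun he => h he.symm),
            if_neg (fun he => h0 he.symm), sub_zero]) hδ
  · rw [coeff_sub, coeff_X', coeff_C, if_pos rfl,
      if_neg (fun he => (fun h => one_ne_zero (Finsupp.single_eq_zero.1 h)) he.symm), sub_zero]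

/-- The Newton-type polynomial associated to an exponent `β`. -/
noncomputable def qpoly (y : Fin d → ℕ → F) (β : Fin d →₀ ℕ) : MvPolynomial (Fin d) F :=
  ∏ i, ∏ k ∈ Finset.range (β i), (X i - C (y i k))

lemma qpoly_MB (y : Fin d → ℕ → F) (β : Fin d →₀ ℕ) : MB β (qpoly y β) := by
  have h1 : ∀ i : Fin d, MB (Finsupp.single i (β i))
      (∏ k ∈ Finset.range (β i), (X i - C (y i k)) : MvPolynomial (Fin d) F) := by
    intro i
    have := MB.prod (Finset.range (β i)) (fun _ => Finsupp.single i 1)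
      (fun k => X i - C (y i k)) (fun k _ => MB.X_sub_C i (y i k))
    simpa [Finset.sum_const, Finsupp.smul_single] using this
  have := MB.prod Finset.univ (fun i => Finsupp.single i (β i)) _ (fun i _ => h1 i)
  simpa [Finsupp.univ_sum_single, qpoly] using this

lemma eval_qpoly (y : Fin d → ℕ → F) (β : Fin d →₀ ℕ) (γ : Fin d → ℕ) :
    eval (fun i => y i (γ i)) (qpoly y β) =
      ∏ i, ∏ k ∈ Finset.range (β i), (y i (γ i) - y i k) := by
  simp only [qpoly, map_prod, map_sub, eval_X, eval_C]

lemma eval_qpoly_eq_zero {y : Fin d → ℕ → F} {β : Fin d →₀ ℕ} {γ : Fin d → ℕ}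
    (h : ¬ ∀ i, β i ≤ γ i) : eval (fun i => y i (γ i)) (qpoly y β) = 0 := by
  push_neg at h
  obtain ⟨i, hi⟩ := h
  rw [eval_qpoly]
  exact Finset.prod_eq_zero (Finset.mem_univ i)
    (Finset.prod_eq_zero (Finset.mem_range.2 hi) (by simp))

lemma eval_qpoly_ne_zero {y : Fin d → ℕ → F} (hy : ∀ i, Function.Injective (y i))
    {β : Fin d →₀ ℕ} {γ : Fin d → ℕ} (h : ∀ i, β i ≤ γ i) :
    eval (fun i => y i (γ i)) (qpoly y β) ≠ 0 := by
  rw [eval_qpoly]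
  refine Finset.prod_ne_zero_iff.2 fun i _ => Finset.prod_ne_zero_iff.2 fun k hk => ?_
  rw [Finset.mem_range] at hk
  refine sub_ne_zero.2 fun he => ?_
  have := hy i he
  have hb := h i
  omega

end Stmt10Aux

section Aux10

open Stmt10Aux Module

variable {F : Type*} [Field F] {d : ℕ}

lemma mem_vanishIdeal_iff {Ξ : Set (Fin d → F)} {p : MvPolynomial (Fin d) F} :
    p ∈ vanishIdeal Ξ ↔ ∀ ξ ∈ Ξ, eval ξ p = 0 := by
  simp [vanishIdeal, Ideal.mem_iInf, RingHom.mem_ker]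

set_option maxHeartbeats 1000000 in
theorem stmt10' {F : Type*} [Field F] {d : ℕ}
    (A : Set (Fin d → ℕ)) (y : Fin d → ℕ → F) (Ξ : Set (Fin d → F))
    (hfin : Ξ.Finite) (hcart : IsCartesianWith A y Ξ) :
    IsMOQB (vanishIdeal Ξ) ((fun α : Fin d → ℕ => Finsupp.equivFunOnFinite.symm α) '' A) ∧
    ∀ O : Set (Fin d →₀ ℕ), IsMOQB (vanishIdeal Ξ) O →
      O = (fun α : Fin d → ℕ => Finsupp.equivFunOnFinite.symm α) '' A := by
  classical
  obtain ⟨hA, hy, hΞ⟩ := hcart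
  set I : Ideal (MvPolynomial (Fin d) F) := vanishIdeal Ξ with hI
  set N' : Set (Fin d →₀ ℕ) :=
    (fun α : Fin d → ℕ => Finsupp.equivFunOnFinite.symm α) '' A with hN'
  -- membership characterization
  have memN' : ∀ β : Fin d →₀ ℕ, β ∈ N' ↔ ⇑β ∈ A := by
    intro β
    constructor
    · rintro ⟨α, hα, rfl⟩
      rwa [show ⇑(Finsupp.equivFunOnFinite.symm α) = α from
        Finsupp.equivFunOnFinite.apply_symm_apply α]
    · intro h
      exact ⟨⇑β, h, Finsupp.equivFunOnFinite_symm_coe β⟩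
  -- A is finite
  have hptinj : Function.Injective (fun α : Fin d → ℕ => fun i => y i (α i)) := by
    intro a b hab
    funext i
    exact hy i (congrFun hab i)
  have hAfin : A.Finite :=
    Set.Finite.of_finite_image (hΞ ▸ hfin) hptinj.injOn
  have hN'fin : N'.Finite := hAfin.image _
  haveI : Fintype ↥N' := hN'fin.fintype
  have hN'low : IsLowerSet N' := by
    intro a b hba haN'
    rw [memN'] at *
    exact hA (fun i => hba i) haN'
  -- key vanishing fact
  have hq_mem : ∀ β : Fin d →₀ ℕ, ⇑β ∉ A → qpoly y β ∈ I := by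
    intro β hβ
    rw [hI, mem_vanishIdeal_iff]
    intro ξ hξ
    rw [hΞ] at hξ
    obtain ⟨γ, hγ, rfl⟩ := hξ
    refine eval_qpoly_eq_zero fun hall => hβ (hA (fun i => hall i) hγ)
  -- elements of I vanish on points of Ξ
  have hvanish : ∀ p ∈ I, ∀ γ ∈ A, eval (fun i => y i (γ i)) p = 0 := by
    intro p hp γ hγ
    rw [hI, mem_vanishIdeal_iff] at hp
    exact hp _ (hΞ ▸ ⟨γ, hγ, rfl⟩)
  -- the remainder polynomial
  have hrem : ∀ β : Fin d →₀ ℕ, ⇑β ∉ A →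
      Ideal.Quotient.mk I (monomial β (1 : F)) =
        - Ideal.Quotient.mk I (qpoly y β - monomial β 1) ∧
      (∀ δ ∈ (qpoly y β - monomial β (1:F)).support, δ ≤ β ∧ δ ≠ β) := by
    intro β hβ
    constructor
    · have h0 : Ideal.Quotient.mk I (qpoly y β) = 0 :=
        Ideal.Quotient.eq_zero_iff_mem.2 (hq_mem β hβ)
      rw [RingHom.map_sub, h0, zero_sub, neg_neg]
    · intro δ hδ
      rw [MvPolynomial.mem_support_iff, coeff_sub, coeff_monomial] at hδ
      by_cases h : δ = β
      · rw [if_pos h.symm, (h ▸ (qpoly_MB y β).2 : coeff δ (qpoly y β) = 1)] at hδ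
        simp at hδ
      · refine ⟨(qpoly_MB y β).1 δ (MvPolynomial.mem_support_iff.2 ?_), h⟩
        rw [if_neg (fun he => h he.symm), sub_zero] at hδ
        exact hδ
  -- mk commutes with scalar multiplication
  have mk_smul : ∀ (c : F) (p : MvPolynomial (Fin d) F),
      Ideal.Quotient.mk I (c • p) = c • Ideal.Quotient.mk I p := by
    intro c p
    have := map_smul (Ideal.Quotient.mkₐ F I) c p
    rwa [Ideal.Quotient.mkₐ_eq_mk] at this
  -- expansion of the class of any polynomial as combination of monomial classes
  have hexp : ∀ p : MvPolynomial (Fin d) F, Ideal.Quotient.mk I p =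
      ∑ δ ∈ p.support, coeff δ p • Ideal.Quotient.mk I (monomial δ 1) := by
    intro p
    conv_lhs => rw [p.as_sum]
    rw [map_sum (Ideal.Quotient.mk I)]
    refine Finset.sum_congr rfl fun δ _ => ?_
    rw [← mk_smul]
    congr 1
    rw [smul_monomial, smul_eq_mul, mul_one]
  set v : ↥N' → MvPolynomial (Fin d) F ⧸ I :=
    fun t => Ideal.Quotient.mk I (monomial (↑t : Fin d →₀ ℕ) (1 : F)) with hv
  -- all monomial classes lie in the span of the `N'`-monomial classes
  have hmono_mem : ∀ β : Fin d →₀ ℕ,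
      Ideal.Quotient.mk I (monomial β 1) ∈ Submodule.span F (Set.range v) := by
    have key : ∀ n : ℕ, ∀ β : Fin d →₀ ℕ, (∑ i, β i) = n →
        Ideal.Quotient.mk I (monomial β 1) ∈ Submodule.span F (Set.range v) := by
      intro n
      induction n using Nat.strong_induction_on with
      | _ n ih =>
        intro β hβn
        by_cases hβA : ⇑β ∈ A
        · exact Submodule.subset_span ⟨⟨β, (memN' β).2 hβA⟩, rfl⟩
        · obtain ⟨hmk, hsupp⟩ := hrem β hβA
          rw [hmk]
          refine Submodule.neg_mem _ ?_
          rw [hexp (qpoly y β - monomial β 1)]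
          refine Submodule.sum_mem _ fun δ hδ => Submodule.smul_mem _ _ ?_
          obtain ⟨hle, hne⟩ := hsupp δ hδ
          have hlt : (∑ i, δ i) < ∑ i, β i := by
            obtain ⟨j, hj⟩ : ∃ j, δ j ≠ β j := by
              by_contra hco
              push_neg at hco
              exact hne (Finsupp.ext hco)
            exact Finset.sum_lt_sum (fun i _ => hle i)
              ⟨j, Finset.mem_univ j, lt_of_le_of_ne (hle j) hj⟩
          exact ih (∑ i, δ i) (hβn ▸ hlt) δ rfl
    exact fun β => key (∑ i, β i) β rfl
  have hspan_top : Submodule.span F (Set.range v) = ⊤ := by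
    rw [Submodule.eq_top_iff']
    intro x
    obtain ⟨p, rfl⟩ := Ideal.Quotient.mk_surjective x
    rw [hexp p]
    exact Submodule.sum_mem _ fun δ _ => Submodule.smul_mem _ _ (hmono_mem δ)
  -- linear independence of the Newton polynomial classes
  have hqind : LinearIndependent F (fun t : ↥N' =>
      Ideal.Quotient.mk I (qpoly y ↑t)) := by
    rw [linearIndependent_iff]
    intro l hl
    by_contra hlne
    obtain ⟨t0, ht0s, ht0min⟩ := l.support.exists_minimal
      (Finsupp.support_nonempty_iff.2 hlne)
    have hp : (∑ t ∈ l.support, l t • qpoly y ↑t) ∈ I := by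
      rw [← Ideal.Quotient.eq_zero_iff_mem, map_sum (Ideal.Quotient.mk I)]
      rw [Finsupp.linearCombination_apply, Finsupp.sum] at hl
      rw [← hl]
      exact Finset.sum_congr rfl fun t _ => mk_smul _ _
    have h0 := hvanish _ hp ⇑(↑t0 : Fin d →₀ ℕ) ((memN' _).1 t0.2)
    rw [map_sum] at h0
    rw [Finset.sum_eq_single t0 (fun t hts htne => ?_) (fun h => absurd ht0s h)] at h0
    · rw [smul_eval] at h0
      rcases mul_eq_zero.1 h0 with h | h
      · exact Finsupp.mem_support_iff.1 ht0s h
      · exact eval_qpoly_ne_zero hy (fun i => le_rfl) h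
    · rw [smul_eval]
      refine mul_eq_zero_of_right _ (eval_qpoly_eq_zero fun hall => ?_)
      have hlt : (↑t : Fin d →₀ ℕ) < ↑t0 :=
        lt_of_le_of_ne (Finsupp.le_def.2 hall) fun he => htne (Subtype.ext he)
      exact absurd (ht0min hts (le_of_lt (Subtype.coe_lt_coe.1 hlt))) (not_le_of_gt (Subtype.coe_lt_coe.1 hlt))
  haveI hFD : Module.Finite F (MvPolynomial (Fin d) F ⧸ I) := by
    rw [Module.finite_def]
    exact ⟨(Set.finite_range v).toFinset, by rw [Set.Finite.coe_toFinset]; exact hspan_top⟩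
  have hcard : Fintype.card ↥N' = finrank F (MvPolynomial (Fin d) F ⧸ I) :=
    le_antisymm hqind.fintype_card_le_finrank (finrank_le_of_span_eq_top hspan_top)
  have hmind : LinearIndependent F v :=
    linearIndependent_of_top_le_span_of_card_eq_finrank (le_of_eq hspan_top.symm) hcard
  refine ⟨⟨hN'fin, hN'low, hmind, hspan_top⟩, ?_⟩
  rintro O ⟨hOfin, hOlow, hOind, hOspan⟩
  haveI : Fintype ↥O := hOfin.fintype
  have hOsub : O ⊆ N' := by
    intro β hβO
    by_contra hβN
    have hβA : ⇑β ∉ A := fun h => hβN ((memN' β).2 h)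
    obtain ⟨hmk, hsupp⟩ := hrem β hβA
    have hmem : Ideal.Quotient.mk I (monomial β (1:F)) ∈ Submodule.span F
        ((fun t : ↥O => Ideal.Quotient.mk I (monomial (↑t : Fin d →₀ ℕ) (1:F))) ''
          ({(⟨β, hβO⟩ : ↥O)}ᶜ : Set ↥O)) := by
      rw [hmk]
      refine Submodule.neg_mem _ ?_
      rw [hexp (qpoly y β - monomial β 1)]
      refine Submodule.sum_mem _ fun δ hδ => Submodule.smul_mem _ _ ?_
      obtain ⟨hle, hne⟩ := hsupp δ hδ
      have hδO : δ ∈ O := hOlow hle hβO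
      refine Submodule.subset_span ⟨⟨δ, hδO⟩, ?_, rfl⟩
      simp only [Set.mem_compl_iff, Set.mem_singleton_iff, Subtype.ext_iff]
      exact hne
    exact hOind.notMem_span_image
      (by simp : (⟨β, hβO⟩ : ↥O) ∉ ({(⟨β, hβO⟩ : ↥O)}ᶜ : Set ↥O)) hmem
  have hOcard : Fintype.card ↥O = finrank F (MvPolynomial (Fin d) F ⧸ I) :=
    le_antisymm hOind.fintype_card_le_finrank (finrank_le_of_span_eq_top hOspan)
  refine Set.eq_of_subset_of_ncard_le hOsub ?_ hN'fin
  rw [← Nat.card_coe_set_eq, ← Nat.card_coe_set_eq,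
    Nat.card_eq_fintype_card, Nat.card_eq_fintype_card, hOcard, hcard]

end Aux10


/-- Proposition 3.2. If `Ξ ⊆ F^d` is an `A`-Cartesian set, then the
vanishing ideal `I(Ξ)` has a unique monomial order quotient basis, namely
`N = {x^α : α ∈ A}`. -/
theorem stmt10 {F : Type*} [Field F] [CharZero F] {d : ℕ}
    (A : Set (Fin d → ℕ)) (y : Fin d → ℕ → F) (Ξ : Set (Fin d → F))
    (hfin : Ξ.Finite) (hcart : IsCartesianWith A y Ξ) :
    IsMOQB (vanishIdeal Ξ) ((fun α : Fin d → ℕ => Finsupp.equivFunOnFinite.symm α) '' A) ∧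
    ∀ O : Set (Fin d →₀ ℕ), IsMOQB (vanishIdeal Ξ) O →
      O = (fun α : Fin d → ℕ => Finsupp.equivFunOnFinite.symm α) '' A := by
  exact stmt10' A y Ξ hfin hcart
end

section
/- Let Ξ ⊂ F^d be an A-Cartesian set. Then for every monomial order ≺, the Gröbner éscalier N_≺(I(Ξ)) of the vanishing ideal I(Ξ) equals {x^α : α ∈ A}; in particular it is independent of the monomial order. -/
open MvPolynomial

/-! ### Auxiliary lemmas -/

/-- A monomial order refines the pointwise (divisibility) order. -/
lemma MonOrder.le_of_le {d : ℕ} (o : MonOrder d) {a b : Fin d →₀ ℕ} (h : a ≤ b) :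
    o.toLinearOrder.le a b := by
  obtain ⟨c, rfl⟩ := le_iff_exists_add.mp h
  have h2 := o.add_le_add 0 c a (o.zero_le c)
  simpa [add_comm] using h2

/-- Univariate "dual functional" from the inverse Vandermonde matrix: coefficients `c` such
that `∑ a, c a * y a ^ b = δ_{b,g}` for all `b ≤ g`. -/
lemma uni_dual {F : Type*} [Field F] (y : ℕ → F) (hy : Function.Injective y) (g : ℕ) :
    ∃ c : Fin (g + 1) → F, ∀ b : ℕ, b ≤ g →
      (∑ a : Fin (g + 1), c a * y a ^ b) = if b = g then 1 else 0 := by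
  set V : Matrix (Fin (g + 1)) (Fin (g + 1)) F :=
    (Matrix.vandermonde fun a : Fin (g + 1) => y a).transpose with hVdef
  have hdet : V.det ≠ 0 := by
    rw [hVdef, Matrix.det_transpose]
    exact Matrix.det_vandermonde_ne_zero_iff.mpr (hy.comp Fin.val_injective)
  have hunit : IsUnit V.det := Ne.isUnit hdet
  refine ⟨V⁻¹.mulVec ((Pi.single (Fin.last g) 1 : Fin (g + 1) → F)), ?_⟩
  intro b hb
  have key : V.mulVec (V⁻¹.mulVec ((Pi.single (Fin.last g) 1 : Fin (g + 1) → F))) = (Pi.single (Fin.last g) 1 : Fin (g + 1) → F) := by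
    rw [Matrix.mulVec_mulVec, Matrix.mul_nonsing_inv _ hunit, Matrix.one_mulVec]
  have h2 := congrFun key (⟨b, Nat.lt_succ_of_le hb⟩ : Fin (g + 1))
  have hV : ∀ (i j : Fin (g + 1)), V i j = y j ^ (i : ℕ) := by
    intro i j; simp [hVdef, Matrix.vandermonde]
  rw [Matrix.mulVec] at h2
  simp only [dotProduct, hV] at h2
  have hsingle : (Pi.single (Fin.last g) 1 : Fin (g + 1) → F) (⟨b, Nat.lt_succ_of_le hb⟩ : Fin (g + 1))
      = if b = g then 1 else 0 := by
    rw [Pi.single_apply]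
    congr 1
    simp [Fin.ext_iff, Fin.last, eq_comm]
  rw [hsingle] at h2
  rw [← h2]
  apply Finset.sum_congr rfl
  intro a _
  ring

/-- Multiplying by a linear factor `X i - C a` shifts a "triangular with leading coeff 1"
polynomial by `single i 1`. -/
lemma lin_step {F : Type*} [Field F] {d : ℕ} (p : MvPolynomial (Fin d) F) (t : Fin d →₀ ℕ)
    (hs : ∀ β ∈ p.support, β ≤ t) (hc : coeff t p = 1) (i : Fin d) (a : F) :
    (∀ β ∈ (p * (X i - C a)).support, β ≤ t + Finsupp.single i 1) ∧
      coeff (t + Finsupp.single i 1) (p * (X i - C a)) = 1 := by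
  constructor
  · intro β hβ
    have hmem := MvPolynomial.support_mul p (X i - C a) hβ
    rw [Finset.mem_add] at hmem
    obtain ⟨b1, hb1, b2, hb2, rfl⟩ := hmem
    have h1 : b1 ≤ t := hs b1 hb1
    have h2 : b2 ≤ Finsupp.single i 1 := by
      have hsub : (X i - C a : MvPolynomial (Fin d) F).support ⊆
          (X i : MvPolynomial (Fin d) F).support ∪ (C a : MvPolynomial (Fin d) F).support := by
        simpa [sub_eq_add_neg, MvPolynomial.support_neg] using
          MvPolynomial.support_add (p := (X i : MvPolynomial (Fin d) F)) (q := -(C a))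
      have := hsub hb2
      rw [Finset.mem_union] at this
      rcases this with h | h
      · rw [MvPolynomial.support_X] at h
        simp only [Finset.mem_singleton] at h
        exact le_of_eq h
      · rw [MvPolynomial.mem_support_iff, MvPolynomial.coeff_C] at h
        have hb20 : b2 = 0 := by
          by_contra hne
          simp [Ne.symm hne] at h
        subst hb20
        exact zero_le
    exact add_le_add h1 h2
  · have hre : p * (X i - C a) = p * X i - C a * p := by ring
    rw [hre, coeff_sub, coeff_mul_X, hc, coeff_C_mul]
    have h0 : coeff (t + Finsupp.single i 1) p = 0 := by
      by_contra h
      have hle := hs _ (MvPolynomial.mem_support_iff.mpr h)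
      have := Finsupp.le_def.mp hle i
      simp [Finsupp.add_apply, Finsupp.single_apply] at this
    rw [h0]
    ring

/-- Products of distinct linear factors: support bound and leading coefficient. -/
lemma prod_lin {F : Type*} [Field F] {d : ℕ} {ι : Type} [DecidableEq ι] (s : Finset ι)
    (v : ι → Fin d) (a : ι → F) :
    (∀ β ∈ (∏ j ∈ s, (X (v j) - C (a j)) : MvPolynomial (Fin d) F).support,
        β ≤ ∑ j ∈ s, Finsupp.single (v j) 1) ∧
      coeff (∑ j ∈ s, Finsupp.single (v j) 1)
        (∏ j ∈ s, (X (v j) - C (a j)) : MvPolynomial (Fin d) F) = 1 := by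
  classical
  induction s using Finset.induction_on with
  | empty =>
      constructor
      · intro β hβ
        simp only [Finset.prod_empty] at hβ
        have hβ0 : β = 0 := by
          rw [MvPolynomial.mem_support_iff, MvPolynomial.coeff_one] at hβ
          by_contra hne
          simp [hne] at hβ
          exact hne hβ.symm
        simp [hβ0]
      · simp
  | insert _ _ hj ih =>
      rename_i j s'
      rw [Finset.prod_insert hj, Finset.sum_insert hj, mul_comm, add_comm]
      exact lin_step _ _ ih.1 ih.2 (v j) (a j)

/-- The Newton-type product polynomial attached to an exponent vector `m`. -/
noncomputable def Pm {F : Type*} [Field F] {d : ℕ} (y : Fin d → ℕ → F) (m : Fin d →₀ ℕ) :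
    MvPolynomial (Fin d) F :=
  ∏ i, ∏ k ∈ Finset.range (m i), (X i - C (y i k))

lemma Pm_props {F : Type*} [Field F] {d : ℕ} (y : Fin d → ℕ → F) (m : Fin d →₀ ℕ) :
    (∀ β ∈ (Pm y m).support, β ≤ m) ∧ coeff m (Pm y m) = 1 := by
  classical
  have hsigma : Pm y m = ∏ j ∈ (Finset.univ.sigma fun i => Finset.range (m i)),
      (X (Sigma.fst j) - C (y j.1 j.2)) := by
    rw [Finset.prod_sigma]
    rfl
  have hsum : (∑ j ∈ (Finset.univ.sigma fun i : Fin d => Finset.range (m i)),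
      Finsupp.single (Sigma.fst j) 1) = m := by
    rw [Finset.sum_sigma]
    have : ∀ i : Fin d, (∑ _k ∈ Finset.range (m i), Finsupp.single i (1 : ℕ))
        = Finsupp.single i (m i) := by
      intro i
      rw [Finset.sum_const, Finset.card_range]
      ext j
      simp [Finsupp.single_apply, Finsupp.smul_apply]
    rw [Finset.sum_congr rfl fun i _ => this i]
    exact Finsupp.univ_sum_single m
  have := prod_lin (Finset.univ.sigma fun i : Fin d => Finset.range (m i))
      (fun j => j.1) (fun j => y j.1 j.2)
  rw [← hsigma, hsum] at this
  exact this

/-- Key lemma: a nonzero polynomial vanishing on the Cartesian grid has no leading monomial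
inside `A`. -/
lemma lm_not_mem {F : Type*} [Field F] {d : ℕ} (A : Set (Fin d → ℕ)) (y : Fin d → ℕ → F)
    (hA : IsLowerSet A) (hy : ∀ i, Function.Injective (y i))
    (f : MvPolynomial (Fin d) F)
    (hf0 : ∀ α ∈ A, eval (fun i => y i (α i)) f = 0)
    (o : MonOrder d) (γ : Fin d →₀ ℕ) (hlm : o.IsLM f γ) (hγ : ⇑γ ∈ A) : False := by
  classical
  choose c hc using fun i => uni_dual (y i) (hy i) (γ i)
  have hzero : ∀ α : (∀ i, Fin (γ i + 1)), eval (fun i => y i (α i)) f = 0 := by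
    intro α
    apply hf0
    apply hA _ hγ
    intro i
    exact Nat.lt_succ_iff.mp (α i).isLt
  have expand : ∀ β : Fin d →₀ ℕ,
      (∏ i, ∑ a : Fin (γ i + 1), c i a * y i a ^ β i)
        = ∑ α ∈ (Finset.univ : Finset (∀ i, Fin (γ i + 1))),
            ∏ i, (c i (α i) * y i (α i) ^ β i) := by
    intro β
    rw [Finset.prod_univ_sum (fun i => (Finset.univ : Finset (Fin (γ i + 1))))
      (fun i a => c i a * y i a ^ β i), Fintype.piFinset_univ]
  have key : (∑ β ∈ f.support, coeff β f *
      ∏ i, ∑ a : Fin (γ i + 1), c i a * y i a ^ β i) = 0 := by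
    calc (∑ β ∈ f.support, coeff β f * ∏ i, ∑ a : Fin (γ i + 1), c i a * y i a ^ β i)
        = ∑ β ∈ f.support, ∑ α : (∀ i, Fin (γ i + 1)),
            coeff β f * ∏ i, (c i (α i) * y i (α i) ^ β i) := by
          refine Finset.sum_congr rfl fun β _ => ?_
          rw [expand β, Finset.mul_sum]
      _ = ∑ α : (∀ i, Fin (γ i + 1)), ∑ β ∈ f.support,
            (∏ i, c i (α i)) * (coeff β f * ∏ i, y i (α i) ^ β i) := by
          rw [Finset.sum_comm]
          refine Finset.sum_congr rfl fun α _ => Finset.sum_congr rfl fun β _ => ?_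
          rw [Finset.prod_mul_distrib]
          ring
      _ = ∑ α : (∀ i, Fin (γ i + 1)), (∏ i, c i (α i)) * eval (fun i => y i (α i)) f := by
          refine Finset.sum_congr rfl fun α _ => ?_
          rw [← Finset.mul_sum, eval_eq']
      _ = 0 := by simp [hzero]
  have hsingle : (∑ β ∈ f.support, coeff β f *
      ∏ i, ∑ a : Fin (γ i + 1), c i a * y i a ^ β i) = coeff γ f := by
    rw [Finset.sum_eq_single γ]
    · have h1 : ∀ i : Fin d, (∑ a : Fin (γ i + 1), c i a * y i a ^ γ i) = 1 := by
        intro i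
        rw [hc i (γ i) le_rfl]
        simp
      rw [Finset.prod_congr rfl fun i _ => h1 i, Finset.prod_const_one, mul_one]
    · intro β hβ hne
      have hex : ∃ i, β i < γ i := by
        by_contra h
        push_neg at h
        have hle : γ ≤ β := Finsupp.le_def.mpr h
        have h1 := hlm.2 β hβ
        have h2 := o.le_of_le hle
        exact hne (o.toLinearOrder.le_antisymm β γ h1 h2)
      obtain ⟨i, hi⟩ := hex
      have h0 : (∑ a : Fin (γ i + 1), c i a * y i a ^ β i) = 0 := by
        rw [hc i (β i) (le_of_lt hi)]
        simp [Nat.ne_of_lt hi]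
      rw [Finset.prod_eq_zero (Finset.mem_univ i) h0, mul_zero]
    · intro h
      exact absurd hlm.1 h
  rw [key] at hsingle
  exact MvPolynomial.mem_support_iff.mp hlm.1 hsingle.symm

/-- Theorem 2.1, Sauer. If `Ξ ⊆ F^d` is an `A`-Cartesian set, then for every
monomial order `≺`, the Gröbner éscalier `N_≺(I(Ξ))` of the vanishing ideal of `Ξ` equals
`{x^α : α ∈ A}`; in particular it is independent of the monomial order. -/
theorem stmt11 {F : Type*} [Field F] [CharZero F] {d : ℕ}
    (A : Set (Fin d → ℕ)) (y : Fin d → ℕ → F) (Ξ : Set (Fin d → F))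
    (hfin : Ξ.Finite) (hcart : IsCartesianWith A y Ξ) :
    ∀ o : MonOrder d,
      escalier o (vanishIdeal Ξ) = (fun α : Fin d → ℕ => Finsupp.equivFunOnFinite.symm α) '' A := by
  obtain ⟨hA, hy, hΞ⟩ := hcart
  intro o
  have memI : ∀ f : MvPolynomial (Fin d) F,
      f ∈ vanishIdeal Ξ ↔ ∀ ξ ∈ Ξ, eval ξ f = 0 := by
    intro f
    simp [vanishIdeal, Ideal.mem_iInf, RingHom.mem_ker]
  ext m
  constructor
  · intro hm
    have hmA : ⇑m ∈ A := by
      by_contra hmA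
      have hprops := Pm_props y m
      have hPI : Pm y m ∈ vanishIdeal Ξ := by
        rw [memI]
        intro ξ hξ
        rw [hΞ] at hξ
        obtain ⟨α, hαA, rfl⟩ := hξ
        have hex : ∃ i : Fin d, α i < m i := by
          by_contra h
          push_neg at h
          exact hmA (hA (fun i => h i) hαA)
        obtain ⟨i, hi⟩ := hex
        have heval : eval (fun i => y i (α i)) (Pm y m)
            = ∏ i, ∏ k ∈ Finset.range (m i), (y i (α i) - y i k) := by
          simp [Pm]
        rw [heval]
        apply Finset.prod_eq_zero (Finset.mem_univ i)
        apply Finset.prod_eq_zero (Finset.mem_range.mpr hi)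
        simp
      have hPne : Pm y m ≠ (0 : MvPolynomial (Fin d) F) := by
        intro h
        have h2 := hprops.2
        rw [h] at h2
        simp at h2
      have hlm : o.IsLM (Pm y m) m :=
        ⟨MvPolynomial.mem_support_iff.mpr (by rw [hprops.2]; exact one_ne_zero),
          fun β hβ => o.le_of_le (hprops.1 β hβ)⟩
      exact hm (Pm y m) hPI hPne m hlm le_rfl
    exact ⟨⇑m, hmA, Finsupp.equivFunOnFinite_symm_coe m⟩
  · rintro ⟨α, hαA, rfl⟩
    intro f hfI hfne β hlm hβle
    have hf0 : ∀ α' ∈ A, eval (fun i => y i (α' i)) f = 0 := by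
      intro α' hα'
      exact (memI f).mp hfI _ (hΞ ▸ ⟨α', hα', rfl⟩)
    have hβA : ⇑β ∈ A := by
      apply hA _ hαA
      intro i
      have := Finsupp.le_def.mp hβle i
      simpa using this
    exact lm_not_mem A y hA hy f hf0 o β hlm hβA
end

section
/- For every d ≥ 3 there exists a finite set Ξ ⊂ F^d of distinct points which is not a Cartesian set but whose vanishing ideal I(Ξ) has a unique monomial order quotient basis. -/
open MvPolynomial

namespace Stmt13Aux

variable {F : Type*} [Field F] {d : ℕ}

def q1 (F : Type*) [Field F] (d : ℕ) : Fin d → F := fun _ => 0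
def q2 (F : Type*) [Field F] (d : ℕ) : Fin d → F := fun i => if (i : ℕ) = 2 then 1 else 0
def q3 (F : Type*) [Field F] (d : ℕ) : Fin d → F := fun i => if (i : ℕ) = 1 then 1 else 0
def q4 (F : Type*) [Field F] (d : ℕ) : Fin d → F :=
  fun i => if (i : ℕ) = 0 ∨ (i : ℕ) = 2 then 1 else 0

lemma eval_monomial_eq_zero (ξ : Fin d → F) (t : Fin d →₀ ℕ) (i : Fin d)
    (hi : t i ≠ 0) (h0 : ξ i = 0) : eval ξ (monomial t (1 : F)) = 0 := by
  rw [eval_monomial, one_mul]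
  refine Finset.prod_eq_zero (Finsupp.mem_support_iff.mpr hi) ?_
  show ξ i ^ t i = 0
  rw [h0, zero_pow hi]

lemma eval_monomial_eq_one (ξ : Fin d → F) (t : Fin d →₀ ℕ)
    (h1 : ∀ i, t i ≠ 0 → ξ i = 1) : eval ξ (monomial t (1 : F)) = 1 := by
  rw [eval_monomial, one_mul]
  refine Finset.prod_eq_one fun i hi => ?_
  show ξ i ^ t i = 1
  rw [h1 i (Finsupp.mem_support_iff.mp hi), one_pow]

lemma mem_vanish (Ξ : Set (Fin d → F)) (f : MvPolynomial (Fin d) F) :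
    f ∈ vanishIdeal Ξ ↔ ∀ ξ ∈ Ξ, eval ξ f = 0 := by
  simp [vanishIdeal, Ideal.mem_iInf, RingHom.mem_ker]

lemma mem_vanish4 (f : MvPolynomial (Fin d) F) :
    f ∈ vanishIdeal {q1 F d, q2 F d, q3 F d, q4 F d} ↔
      eval (q1 F d) f = 0 ∧ eval (q2 F d) f = 0 ∧ eval (q3 F d) f = 0 ∧ eval (q4 F d) f = 0 := by
  rw [mem_vanish]
  constructor
  · intro h
    exact ⟨h _ (by simp), h _ (by simp), h _ (by simp), h _ (by simp)⟩
  · rintro ⟨ha, hb, hc, he⟩ ξ hξ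
    simp only [Set.mem_insert_iff, Set.mem_singleton_iff] at hξ
    rcases hξ with rfl | rfl | rfl | rfl <;> assumption

lemma smul_mk (I : Ideal (MvPolynomial (Fin d) F)) (c : F) (f : MvPolynomial (Fin d) F) :
    Ideal.Quotient.mk I (c • f) = c • Ideal.Quotient.mk I f := by
  rw [← Ideal.Quotient.mkₐ_eq_mk F I, map_smul]

lemma supp_single {i j : Fin d} (h : (Finsupp.single i 1 : Fin d →₀ ℕ) j ≠ 0) : j = i := by
  by_contra hne
  exact h (Finsupp.single_eq_of_ne' (Ne.symm hne))

lemma ev_zero_single (ξ : Fin d → F) (i : Fin d) (h : ξ i = 0) :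
    eval ξ (monomial (Finsupp.single i 1) (1 : F)) = 0 :=
  eval_monomial_eq_zero _ _ i (by simp) h

lemma ev_one_single (ξ : Fin d → F) (i : Fin d) (h : ξ i = 1) :
    eval ξ (monomial (Finsupp.single i 1) (1 : F)) = 1 :=
  eval_monomial_eq_one _ _ (fun j hj => by rw [supp_single hj]; exact h)

lemma ev_one_zero (ξ : Fin d → F) : eval ξ (monomial (0 : Fin d →₀ ℕ) (1 : F)) = 1 :=
  eval_monomial_eq_one _ _ (by simp)

lemma eval_combo (ξ : Fin d → F) (a b c e : F) (s0 s1 s2 s3 : Fin d →₀ ℕ) :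
    eval ξ (a • monomial s0 1 + (b • monomial s1 1 + (c • monomial s2 1 + e • monomial s3 1)))
      = a * eval ξ (monomial s0 1) + (b * eval ξ (monomial s1 1)
        + (c * eval ξ (monomial s2 1) + e * eval ξ (monomial s3 1))) := by
  simp [smul_eq_C_mul]

lemma le_single {i : Fin d} {s : Fin d →₀ ℕ} (h : s ≤ Finsupp.single i 1) :
    s = 0 ∨ s = Finsupp.single i 1 := by
  have hv : ∀ j, s j ≤ (Finsupp.single i 1 : Fin d →₀ ℕ) j := Finsupp.le_def.mp h
  by_cases hsi : s i = 0
  · left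
    ext j
    simp only [Finsupp.coe_zero, Pi.zero_apply]
    by_cases hj : j = i
    · subst hj; exact hsi
    · have := hv j
      rw [Finsupp.single_eq_of_ne' (Ne.symm hj)] at this
      omega
  · right
    ext j
    by_cases hj : j = i
    · subst hj
      have := hv j
      rw [Finsupp.single_eq_same] at this ⊢
      omega
    · have := hv j
      rw [Finsupp.single_eq_of_ne' (Ne.symm hj)] at this ⊢
      omega

lemma single_le {i : Fin d} {t : Fin d →₀ ℕ} (h : t i ≠ 0) : Finsupp.single i 1 ≤ t := by
  rw [Finsupp.le_def]
  intro j
  by_cases hj : i = j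
  · subst hj; rw [Finsupp.single_eq_same]; omega
  · rw [Finsupp.single_eq_of_ne' hj]; omega


set_option maxHeartbeats 2000000 in
set_option synthInstance.maxHeartbeats 1000000 in
theorem moqbExu (hd : 3 ≤ d) :
    ∃! O : Set (Fin d →₀ ℕ),
      IsMOQB (vanishIdeal ({q1 F d, q2 F d, q3 F d, q4 F d} : Set (Fin d → F))) O := by
  classical
  obtain ⟨i0, hi0⟩ : ∃ i : Fin d, (i : ℕ) = 0 := ⟨⟨0, by omega⟩, rfl⟩
  obtain ⟨i1, hi1⟩ : ∃ i : Fin d, (i : ℕ) = 1 := ⟨⟨1, by omega⟩, rfl⟩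
  obtain ⟨i2, hi2⟩ : ∃ i : Fin d, (i : ℕ) = 2 := ⟨⟨2, by omega⟩, rfl⟩
  have h01 : i0 ≠ i1 := fun h => by rw [h, hi1] at hi0; omega
  have h02 : i0 ≠ i2 := fun h => by rw [h, hi2] at hi0; omega
  have h12 : i1 ≠ i2 := fun h => by rw [h, hi2] at hi1; omega
  have hq1 : ∀ i, q1 F d i = 0 := fun _ => rfl
  have hq2v : ∀ i : Fin d, (i : ℕ) ≠ 2 → q2 F d i = 0 := fun i h => by simp [q2, h]
  have hq3v : ∀ i : Fin d, (i : ℕ) ≠ 1 → q3 F d i = 0 := fun i h => by simp [q3, h]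
  have hq4v : ∀ i : Fin d, (i : ℕ) ≠ 0 → (i : ℕ) ≠ 2 → q4 F d i = 0 :=
    fun i h h' => by simp [q4, h, h']
  have hq2_2 : q2 F d i2 = 1 := by simp [q2, hi2]
  have hq3_1 : q3 F d i1 = 1 := by simp [q3, hi1]
  have hq4_0 : q4 F d i0 = 1 := by simp [q4, hi0]
  have hq4_2 : q4 F d i2 = 1 := by simp [q4, hi2]
  have hq2_0 : q2 F d i0 = 0 := hq2v _ (by omega)
  have hq2_1 : q2 F d i1 = 0 := hq2v _ (by omega)
  have hq3_0 : q3 F d i0 = 0 := hq3v _ (by omega)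
  have hq3_2 : q3 F d i2 = 0 := hq3v _ (by omega)
  have hq4_1 : q4 F d i1 = 0 := hq4v _ (by omega) (by omega)
  -- the 16 evaluations
  have v10 := ev_one_zero (q1 F d)
  have v20 := ev_one_zero (q2 F d)
  have v30 := ev_one_zero (q3 F d)
  have v40 := ev_one_zero (q4 F d)
  have v11 := ev_zero_single (q1 F d) i0 (hq1 i0)
  have v12 := ev_zero_single (q1 F d) i1 (hq1 i1)
  have v13 := ev_zero_single (q1 F d) i2 (hq1 i2)
  have v21 := ev_zero_single (q2 F d) i0 hq2_0
  have v22 := ev_zero_single (q2 F d) i1 hq2_1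
  have v23 := ev_one_single (q2 F d) i2 hq2_2
  have v31 := ev_zero_single (q3 F d) i0 hq3_0
  have v32 := ev_one_single (q3 F d) i1 hq3_1
  have v33 := ev_zero_single (q3 F d) i2 hq3_2
  have v41 := ev_one_single (q4 F d) i0 hq4_0
  have v42 := ev_zero_single (q4 F d) i1 hq4_1
  have v43 := ev_one_single (q4 F d) i2 hq4_2
  have indep_core : ∀ a b c e : F,
      a • monomial (0 : Fin d →₀ ℕ) (1 : F) + (b • monomial (Finsupp.single i0 1) 1
        + (c • monomial (Finsupp.single i1 1) 1 + e • monomial (Finsupp.single i2 1) 1))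
        ∈ vanishIdeal ({q1 F d, q2 F d, q3 F d, q4 F d} : Set (Fin d → F)) →
      a = 0 ∧ b = 0 ∧ c = 0 ∧ e = 0 := by
    intro a b c e h
    rw [mem_vanish4] at h
    obtain ⟨E1, E2, E3, E4⟩ := h
    rw [eval_combo, v10, v11, v12, v13] at E1
    rw [eval_combo, v20, v21, v22, v23] at E2
    rw [eval_combo, v30, v31, v32, v33] at E3
    rw [eval_combo, v40, v41, v42, v43] at E4
    exact ⟨by linear_combination E1, by linear_combination E4 - E2,
      by linear_combination E3 - E1, by linear_combination E2 - E1⟩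
  have span_core : ∀ f : MvPolynomial (Fin d) F, ∃ a b c e : F,
      f - (a • monomial (0 : Fin d →₀ ℕ) (1 : F) + (b • monomial (Finsupp.single i0 1) 1
        + (c • monomial (Finsupp.single i1 1) 1 + e • monomial (Finsupp.single i2 1) 1)))
        ∈ vanishIdeal ({q1 F d, q2 F d, q3 F d, q4 F d} : Set (Fin d → F)) := by
    intro f
    refine ⟨eval (q1 F d) f, eval (q4 F d) f - eval (q2 F d) f,
      eval (q3 F d) f - eval (q1 F d) f, eval (q2 F d) f - eval (q1 F d) f, ?_⟩
    rw [mem_vanish4]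
    refine ⟨?_, ?_, ?_, ?_⟩
    · rw [map_sub, eval_combo, v10, v11, v12, v13]; ring
    · rw [map_sub, eval_combo, v20, v21, v22, v23]; ring
    · rw [map_sub, eval_combo, v30, v31, v32, v33]; ring
    · rw [map_sub, eval_combo, v40, v41, v42, v43]; ring
  have hsne : ∀ i : Fin d, (Finsupp.single i 1 : Fin d →₀ ℕ) ≠ 0 := by
    intro i h
    have := congrArg (fun f : Fin d →₀ ℕ => f i) h
    simp [Finsupp.single_eq_same] at this
  have hsd : ∀ i j : Fin d, i ≠ j →
      (Finsupp.single i 1 : Fin d →₀ ℕ) ≠ Finsupp.single j 1 := by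
    intro i j hij h
    have : (Finsupp.single i 1 : Fin d →₀ ℕ) i = (Finsupp.single j 1 : Fin d →₀ ℕ) i := by
      rw [h]
    rw [Finsupp.single_eq_same, Finsupp.single_eq_of_ne' (Ne.symm hij)] at this
    omega
  -- the candidate order ideal
  set Os : Set (Fin d →₀ ℕ) :=
    {0, Finsupp.single i0 1, Finsupp.single i1 1, Finsupp.single i2 1} with hOs
  have hmem0 : (0 : Fin d →₀ ℕ) ∈ Os := Or.inl rfl
  have hmemA : (Finsupp.single i0 1 : Fin d →₀ ℕ) ∈ Os := Or.inr (Or.inl rfl)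
  have hmemB : (Finsupp.single i1 1 : Fin d →₀ ℕ) ∈ Os := Or.inr (Or.inr (Or.inl rfl))
  have hmemC : (Finsupp.single i2 1 : Fin d →₀ ℕ) ∈ Os := Or.inr (Or.inr (Or.inr rfl))
  have hfinS : Os.Finite :=
    Set.Finite.insert _ (Set.Finite.insert _ (Set.Finite.insert _ (Set.finite_singleton _)))
  have hlowS : IsLowerSet Os := by
    intro a b hba ha
    simp only [hOs, Set.mem_insert_iff, Set.mem_singleton_iff] at ha ⊢
    rcases ha with rfl | rfl | rfl | rfl
    · left
      exact le_antisymm hba zero_le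
    · rcases le_single hba with h | h
      · exact Or.inl h
      · exact Or.inr (Or.inl h)
    · rcases le_single hba with h | h
      · exact Or.inl h
      · exact Or.inr (Or.inr (Or.inl h))
    · rcases le_single hba with h | h
      · exact Or.inl h
      · exact Or.inr (Or.inr (Or.inr h))
  have hindS : LinearIndependent F (fun t : Os => Ideal.Quotient.mk
      (vanishIdeal ({q1 F d, q2 F d, q3 F d, q4 F d} : Set (Fin d → F)))
      (monomial (t : Fin d →₀ ℕ) (1 : F))) := by
    rw [show (fun t : Os => Ideal.Quotient.mk
        (vanishIdeal ({q1 F d, q2 F d, q3 F d, q4 F d} : Set (Fin d → F)))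
        (monomial (t : Fin d →₀ ℕ) (1 : F)))
      = ((fun t : Fin d →₀ ℕ => Ideal.Quotient.mk
        (vanishIdeal ({q1 F d, q2 F d, q3 F d, q4 F d} : Set (Fin d → F)))
        (monomial t (1 : F))) ∘ ((↑) : Os → (Fin d →₀ ℕ))) from rfl]
    rw [linearIndependent_comp_subtype_iff, linearIndepOn_iff]
    intro l hl hl0
    set S : Finset (Fin d →₀ ℕ) :=
      {0, Finsupp.single i0 1, Finsupp.single i1 1, Finsupp.single i2 1} with hSdef
    have hsubS : l.support ⊆ S := by
      intro t ht
      have h2 : t ∈ Os := (Finsupp.mem_supported F l).mp hl (Finset.mem_coe.mpr ht)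
      simp only [hOs, Set.mem_insert_iff, Set.mem_singleton_iff] at h2
      simp only [hSdef, Finset.mem_insert, Finset.mem_singleton]
      exact h2
    rw [Finsupp.linearCombination_apply] at hl0
    rw [Finsupp.sum_of_support_subset l hsubS (fun i a => a • Ideal.Quotient.mk
      (vanishIdeal ({q1 F d, q2 F d, q3 F d, q4 F d} : Set (Fin d → F)))
      (monomial i (1 : F))) (fun t _ => zero_smul F _)] at hl0
    have n1 : (0 : Fin d →₀ ℕ) ∉ ({Finsupp.single i0 1, Finsupp.single i1 1,
        Finsupp.single i2 1} : Finset (Fin d →₀ ℕ)) := by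
      simp only [Finset.mem_insert, Finset.mem_singleton]
      push_neg
      exact ⟨Ne.symm (hsne i0), Ne.symm (hsne i1), Ne.symm (hsne i2)⟩
    have n2 : (Finsupp.single i0 1 : Fin d →₀ ℕ) ∉ ({Finsupp.single i1 1,
        Finsupp.single i2 1} : Finset (Fin d →₀ ℕ)) := by
      simp only [Finset.mem_insert, Finset.mem_singleton]
      push_neg
      exact ⟨hsd i0 i1 h01, hsd i0 i2 h02⟩
    have n3 : (Finsupp.single i1 1 : Fin d →₀ ℕ) ∉
        ({Finsupp.single i2 1} : Finset (Fin d →₀ ℕ)) := by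
      simp only [Finset.mem_singleton]
      exact hsd i1 i2 h12
    rw [hSdef, Finset.sum_insert n1, Finset.sum_insert n2, Finset.sum_insert n3,
      Finset.sum_singleton] at hl0
    simp only [← smul_mk, ← map_add] at hl0
    obtain ⟨ha, hb, hc, he⟩ := indep_core _ _ _ _ (Ideal.Quotient.eq_zero_iff_mem.mp hl0)
    ext t
    simp only [Finsupp.coe_zero, Pi.zero_apply]
    by_cases e0 : t = 0
    · subst e0; exact ha
    by_cases eA : t = Finsupp.single i0 1
    · subst eA; exact hb
    by_cases eB : t = Finsupp.single i1 1
    · subst eB; exact hc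
    by_cases eC : t = Finsupp.single i2 1
    · subst eC; exact he
    by_contra hne
    have := hsubS (Finsupp.mem_support_iff.mpr hne)
    simp only [hSdef, Finset.mem_insert, Finset.mem_singleton] at this
    tauto
  have hspanS : Submodule.span F (Set.range fun t : Os => Ideal.Quotient.mk
      (vanishIdeal ({q1 F d, q2 F d, q3 F d, q4 F d} : Set (Fin d → F)))
      (monomial (t : Fin d →₀ ℕ) (1 : F))) = ⊤ := by
    rw [Submodule.eq_top_iff']
    intro q
    obtain ⟨f, rfl⟩ := Ideal.Quotient.mk_surjective q
    obtain ⟨a, b, c, e, hm⟩ := span_core f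
    have h2 := Ideal.Quotient.eq.mpr hm
    rw [h2, map_add, map_add, map_add, smul_mk, smul_mk, smul_mk, smul_mk]
    refine Submodule.add_mem _
      (Submodule.smul_mem _ _ (Submodule.subset_span ⟨⟨0, hmem0⟩, rfl⟩))
      (Submodule.add_mem _
        (Submodule.smul_mem _ _ (Submodule.subset_span ⟨⟨_, hmemA⟩, rfl⟩))
        (Submodule.add_mem _
          (Submodule.smul_mem _ _ (Submodule.subset_span ⟨⟨_, hmemB⟩, rfl⟩))
          (Submodule.smul_mem _ _ (Submodule.subset_span ⟨⟨_, hmemC⟩, rfl⟩))))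
  refine ⟨Os, ⟨hfinS, hlowS, hindS, hspanS⟩, ?_⟩
  -- uniqueness
  rintro O ⟨hfin, hlow, hind, hspan⟩
  have hker : ∀ t, t ∈ O → monomial t (1 : F) ∈
      vanishIdeal ({q1 F d, q2 F d, q3 F d, q4 F d} : Set (Fin d → F)) → False := by
    intro t ht hmem
    exact hind.ne_zero ⟨t, ht⟩ (Ideal.Quotient.eq_zero_iff_mem.mpr hmem)
  have hdup : ∀ t s, t ∈ O → s ∈ O → t ≠ s → (monomial t (1 : F) - monomial s 1) ∈
      vanishIdeal ({q1 F d, q2 F d, q3 F d, q4 F d} : Set (Fin d → F)) → False := by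
    intro t s ht hs hne hmem
    have heq : (fun u : O => Ideal.Quotient.mk
        (vanishIdeal ({q1 F d, q2 F d, q3 F d, q4 F d} : Set (Fin d → F)))
        (monomial (u : Fin d →₀ ℕ) (1 : F))) ⟨t, ht⟩
        = (fun u : O => Ideal.Quotient.mk
        (vanishIdeal ({q1 F d, q2 F d, q3 F d, q4 F d} : Set (Fin d → F)))
        (monomial (u : Fin d →₀ ℕ) (1 : F))) ⟨s, hs⟩ := Ideal.Quotient.eq.mpr hmem
    have h2 := hind.injective heq
    exact hne (by simpa using congrArg Subtype.val h2)
  have hOsub : O ⊆ Os := by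
    intro t ht
    by_contra htn
    have htn' : t ≠ 0 ∧ t ≠ Finsupp.single i0 1 ∧ t ≠ Finsupp.single i1 1
        ∧ t ≠ Finsupp.single i2 1 := by
      simp only [hOs, Set.mem_insert_iff, Set.mem_singleton_iff] at htn
      push_neg at htn
      exact htn
    obtain ⟨ht0c, hteA, hteB, hteC⟩ := htn'
    by_cases hA : ∀ i : Fin d, t i ≠ 0 → ((i : ℕ) = 0 ∨ (i : ℕ) = 1 ∨ (i : ℕ) = 2)
    · have hA' : ∀ i : Fin d, t i ≠ 0 → i = i0 ∨ i = i1 ∨ i = i2 := by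
        intro i h
        rcases hA i h with h' | h' | h'
        · exact Or.inl (Fin.ext (by omega))
        · exact Or.inr (Or.inl (Fin.ext (by omega)))
        · exact Or.inr (Or.inr (Fin.ext (by omega)))
      by_cases hc0 : t i0 = 0 <;> by_cases hc1 : t i1 = 0 <;> by_cases hc2 : t i2 = 0
      · -- t = 0
        refine ht0c (Finsupp.ext fun j => ?_)
        by_contra hj
        rcases hA' j hj with rfl | rfl | rfl
        exacts [hj hc0, hj hc1, hj hc2]
      · -- support ⊆ {i2} : duplicate with single i2 1
        refine hdup t (Finsupp.single i2 1) ht (hlow (single_le hc2) ht) hteC ?_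
        rw [mem_vanish4]
        refine ⟨?_, ?_, ?_, ?_⟩
        · rw [map_sub, eval_monomial_eq_zero (q1 F d) t i2 hc2 (hq1 i2),
            ev_zero_single (q1 F d) i2 (hq1 i2), sub_zero]
        · rw [map_sub, eval_monomial_eq_one (q2 F d) t (fun j hj => by
            rcases hA' j hj with rfl | rfl | rfl
            · exact absurd hc0 hj
            · exact absurd hc1 hj
            · exact hq2_2), ev_one_single (q2 F d) i2 hq2_2, sub_self]
        · rw [map_sub, eval_monomial_eq_zero (q3 F d) t i2 hc2 hq3_2,
            ev_zero_single (q3 F d) i2 hq3_2, sub_zero]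
        · rw [map_sub, eval_monomial_eq_one (q4 F d) t (fun j hj => by
            rcases hA' j hj with rfl | rfl | rfl
            · exact absurd hc0 hj
            · exact absurd hc1 hj
            · exact hq4_2), ev_one_single (q4 F d) i2 hq4_2, sub_self]
      · -- support ⊆ {i1} : duplicate with single i1 1
        refine hdup t (Finsupp.single i1 1) ht (hlow (single_le hc1) ht) hteB ?_
        rw [mem_vanish4]
        refine ⟨?_, ?_, ?_, ?_⟩
        · rw [map_sub, eval_monomial_eq_zero (q1 F d) t i1 hc1 (hq1 i1),
            ev_zero_single (q1 F d) i1 (hq1 i1), sub_zero]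
        · rw [map_sub, eval_monomial_eq_zero (q2 F d) t i1 hc1 hq2_1,
            ev_zero_single (q2 F d) i1 hq2_1, sub_zero]
        · rw [map_sub, eval_monomial_eq_one (q3 F d) t (fun j hj => by
            rcases hA' j hj with rfl | rfl | rfl
            · exact absurd hc0 hj
            · exact hq3_1
            · exact absurd hc2 hj), ev_one_single (q3 F d) i1 hq3_1, sub_self]
        · rw [map_sub, eval_monomial_eq_zero (q4 F d) t i1 hc1 hq4_1,
            ev_zero_single (q4 F d) i1 hq4_1, sub_zero]
      · -- t i1 ≠ 0, t i2 ≠ 0 : monomial vanishes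
        refine hker t ht ?_
        rw [mem_vanish4]
        exact ⟨eval_monomial_eq_zero (q1 F d) t i1 hc1 (hq1 i1),
          eval_monomial_eq_zero (q2 F d) t i1 hc1 hq2_1,
          eval_monomial_eq_zero (q3 F d) t i2 hc2 hq3_2,
          eval_monomial_eq_zero (q4 F d) t i1 hc1 hq4_1⟩
      · -- support ⊆ {i0} : duplicate with single i0 1
        refine hdup t (Finsupp.single i0 1) ht (hlow (single_le hc0) ht) hteA ?_
        rw [mem_vanish4]
        refine ⟨?_, ?_, ?_, ?_⟩
        · rw [map_sub, eval_monomial_eq_zero (q1 F d) t i0 hc0 (hq1 i0),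
            ev_zero_single (q1 F d) i0 (hq1 i0), sub_zero]
        · rw [map_sub, eval_monomial_eq_zero (q2 F d) t i0 hc0 hq2_0,
            ev_zero_single (q2 F d) i0 hq2_0, sub_zero]
        · rw [map_sub, eval_monomial_eq_zero (q3 F d) t i0 hc0 hq3_0,
            ev_zero_single (q3 F d) i0 hq3_0, sub_zero]
        · rw [map_sub, eval_monomial_eq_one (q4 F d) t (fun j hj => by
            rcases hA' j hj with rfl | rfl | rfl
            · exact hq4_0
            · exact absurd hc1 hj
            · exact absurd hc2 hj), ev_one_single (q4 F d) i0 hq4_0, sub_self]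
      · -- support ⊆ {i0, i2} : duplicate with single i0 1
        refine hdup t (Finsupp.single i0 1) ht (hlow (single_le hc0) ht) hteA ?_
        rw [mem_vanish4]
        refine ⟨?_, ?_, ?_, ?_⟩
        · rw [map_sub, eval_monomial_eq_zero (q1 F d) t i0 hc0 (hq1 i0),
            ev_zero_single (q1 F d) i0 (hq1 i0), sub_zero]
        · rw [map_sub, eval_monomial_eq_zero (q2 F d) t i0 hc0 hq2_0,
            ev_zero_single (q2 F d) i0 hq2_0, sub_zero]
        · rw [map_sub, eval_monomial_eq_zero (q3 F d) t i0 hc0 hq3_0,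
            ev_zero_single (q3 F d) i0 hq3_0, sub_zero]
        · rw [map_sub, eval_monomial_eq_one (q4 F d) t (fun j hj => by
            rcases hA' j hj with rfl | rfl | rfl
            · exact hq4_0
            · exact absurd hc1 hj
            · exact hq4_2), ev_one_single (q4 F d) i0 hq4_0, sub_self]
      · -- t i0 ≠ 0, t i1 ≠ 0 : monomial vanishes
        refine hker t ht ?_
        rw [mem_vanish4]
        exact ⟨eval_monomial_eq_zero (q1 F d) t i0 hc0 (hq1 i0),
          eval_monomial_eq_zero (q2 F d) t i0 hc0 hq2_0,
          eval_monomial_eq_zero (q3 F d) t i0 hc0 hq3_0,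
          eval_monomial_eq_zero (q4 F d) t i1 hc1 hq4_1⟩
      · -- t i0 ≠ 0, t i1 ≠ 0 : monomial vanishes
        refine hker t ht ?_
        rw [mem_vanish4]
        exact ⟨eval_monomial_eq_zero (q1 F d) t i0 hc0 (hq1 i0),
          eval_monomial_eq_zero (q2 F d) t i0 hc0 hq2_0,
          eval_monomial_eq_zero (q3 F d) t i0 hc0 hq3_0,
          eval_monomial_eq_zero (q4 F d) t i1 hc1 hq4_1⟩
    · push_neg at hA
      obtain ⟨i, hti, hx, hy, hz⟩ := hA
      refine hker t ht ?_
      rw [mem_vanish4]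
      exact ⟨eval_monomial_eq_zero (q1 F d) t i hti (hq1 i),
        eval_monomial_eq_zero (q2 F d) t i hti (hq2v i hz),
        eval_monomial_eq_zero (q3 F d) t i hti (hq3v i hy),
        eval_monomial_eq_zero (q4 F d) t i hti (hq4v i hx hz)⟩
  have hOsup : Os ⊆ O := by
    intro t' ht'
    by_contra htn
    have hx : Ideal.Quotient.mk
        (vanishIdeal ({q1 F d, q2 F d, q3 F d, q4 F d} : Set (Fin d → F)))
        (monomial t' (1 : F)) ∈ Submodule.span F (Set.range fun t : O =>
          Ideal.Quotient.mk
            (vanishIdeal ({q1 F d, q2 F d, q3 F d, q4 F d} : Set (Fin d → F)))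
            (monomial (t : Fin d →₀ ℕ) (1 : F))) := by
      rw [hspan]; exact Submodule.mem_top
    have himage : (Set.range fun t : O => Ideal.Quotient.mk
        (vanishIdeal ({q1 F d, q2 F d, q3 F d, q4 F d} : Set (Fin d → F)))
        (monomial (t : Fin d →₀ ℕ) (1 : F)))
        ⊆ (fun t : Os => Ideal.Quotient.mk
          (vanishIdeal ({q1 F d, q2 F d, q3 F d, q4 F d} : Set (Fin d → F)))
          (monomial (t : Fin d →₀ ℕ) (1 : F))) '' {u : Os | (u : Fin d →₀ ℕ) ≠ t'} := by
      rintro x ⟨⟨s, hs⟩, rfl⟩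
      exact ⟨⟨s, hOsub hs⟩, fun hc => htn (hc ▸ hs), rfl⟩
    have hnot := hindS.notMem_span_image
      (s := {u : Os | (u : Fin d →₀ ℕ) ≠ t'}) (x := ⟨t', ht'⟩) (by simp)
    exact hnot (Submodule.span_mono himage hx)
  exact Set.Subset.antisymm hOsub hOsup

theorem notCart (hd : 3 ≤ d) :
    ¬ IsCartesian ({q1 F d, q2 F d, q3 F d, q4 F d} : Set (Fin d → F)) := by
  classical
  rintro ⟨A, y, hA, hy, himg⟩
  set g : (Fin d → ℕ) → (Fin d → F) := fun α i => y i (α i) with hgdef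
  have hginj : Function.Injective g := by
    intro a b h
    funext i
    exact hy i (congrFun h i)
  obtain ⟨i0, hi0⟩ : ∃ i : Fin d, (i : ℕ) = 0 := ⟨⟨0, by omega⟩, rfl⟩
  obtain ⟨i1, hi1⟩ : ∃ i : Fin d, (i : ℕ) = 1 := ⟨⟨1, by omega⟩, rfl⟩
  obtain ⟨i2, hi2⟩ : ∃ i : Fin d, (i : ℕ) = 2 := ⟨⟨2, by omega⟩, rfl⟩
  have h01 : i0 ≠ i1 := fun h => by rw [h, hi1] at hi0; omega
  have h02 : i0 ≠ i2 := fun h => by rw [h, hi2] at hi0; omega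
  have h12 : i1 ≠ i2 := fun h => by rw [h, hi2] at hi1; omega
  -- preimages of q3 and q4
  have h3 : q3 F d ∈ g '' A := by rw [← himg]; simp [Set.mem_insert_iff]
  have h4 : q4 F d ∈ g '' A := by rw [← himg]; simp [Set.mem_insert_iff]
  obtain ⟨α, hαA, hα⟩ := h3
  obtain ⟨β, hβA, hβ⟩ := h4
  -- α and β differ at coordinates i0, i1, i2
  have hne : ∀ c : Fin d, c = i0 ∨ c = i1 ∨ c = i2 → α c ≠ β c := by
    rintro c hc h
    have heq : q3 F d c = q4 F d c := by
      rw [← hα, ← hβ]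
      show y c (α c) = y c (β c)
      rw [h]
    rcases hc with h' | h' | h' <;> subst h' <;>
      simp [q3, q4, hi0, hi1, hi2, zero_ne_one, one_ne_zero] at heq
  have hex : ∃ γ : Fin d → ℕ, γ ≤ α ∧ γ ≤ β ∧ ∀ i, γ i = α i ∨ γ i = β i :=
    ⟨fun i => min (α i) (β i), fun i => min_le_left _ _, fun i => min_le_right _ _,
      fun i => min_choice _ _⟩
  obtain ⟨γ, hγα, hγβ, hγch⟩ := hex
  have hγA : γ ∈ A := hA hγα hαA
  set u : Fin d → (Fin d → ℕ) := fun c => Function.update γ c (γ c + 1) with hudef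
  have huval : ∀ c i, u c i = if i = c then γ c + 1 else γ i := by
    intro c i
    by_cases h : i = c
    · subst h; simp [u]
    · rw [if_neg h]; simp [u, Function.update_of_ne h]
  have huA : ∀ c : Fin d, α c ≠ β c → u c ∈ A := by
    intro c hc
    rcases lt_or_ge (γ c) (α c) with h | h
    · refine hA (fun i => ?_) hαA
      rw [huval]
      split
      · next he => subst he; exact h
      · exact hγα i
    · have hcb : γ c < β c := by
        have h1 : γ c ≤ α c := hγα c
        have h2 : γ c ≤ β c := hγβ c
        have h3 : α c ≤ γ c := h
        rcases hγch c with h' | h' <;> omega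
      refine hA (fun i => ?_) hβA
      rw [huval]
      split
      · next he => subst he; exact hcb
      · exact hγβ i
  -- the five-element contradiction
  have final : ∀ δ : Fin d → ℕ, δ ∈ A → ∀ c1 c2 : Fin d,
      (c1 = i0 ∨ c1 = i1 ∨ c1 = i2) → (c2 = i0 ∨ c2 = i1 ∨ c2 = i2) → c1 ≠ c2 →
      γ c1 < δ c1 → γ c2 < δ c2 → False := by
    intro δ hδA c1 c2 hc1m hc2m hc12 hd1 hd2
    have hδu : ∀ c : Fin d, δ ≠ u c := by
      intro c h
      by_cases hcc : c = c1
      · subst hcc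
        have := congrFun h c2
        rw [huval, if_neg (fun hh => hc12 hh.symm)] at this
        omega
      · have := congrFun h c1
        rw [huval, if_neg (fun hh => hcc hh.symm)] at this
        omega
    have hδγ : δ ≠ γ := fun h => by rw [h] at hd1; omega
    have hγu : ∀ c, γ ≠ u c := by
      intro c h
      have := congrFun h c
      rw [huval, if_pos rfl] at this
      omega
    have huu : ∀ c c' : Fin d, c ≠ c' → u c ≠ u c' := by
      intro c c' hcc h
      have := congrFun h c
      rw [huval, huval, if_pos rfl, if_neg (fun hh => hcc hh)] at this
      omega
    -- Finset cardinality contradiction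
    set S : Finset (Fin d → F) := {q1 F d, q2 F d, q3 F d, q4 F d} with hS
    set T : Finset (Fin d → F) := {g γ, g (u i0), g (u i1), g (u i2), g δ} with hT
    have hmemS : ∀ x : Fin d → ℕ, x ∈ A → g x ∈ S := by
      intro x hx
      have : g x ∈ ({q1 F d, q2 F d, q3 F d, q4 F d} : Set (Fin d → F)) := by
        rw [himg]; exact ⟨x, hx, rfl⟩
      simpa [S, Set.mem_insert_iff, Finset.mem_insert] using this
    have hu0A : u i0 ∈ A := huA i0 (hne i0 (Or.inl rfl))
    have hu1A : u i1 ∈ A := huA i1 (hne i1 (Or.inr (Or.inl rfl)))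
    have hu2A : u i2 ∈ A := huA i2 (hne i2 (Or.inr (Or.inr rfl)))
    have hTS : T ⊆ S := by
      intro z hz
      simp only [T, Finset.mem_insert, Finset.mem_singleton] at hz
      rcases hz with h | h | h | h | h <;> subst h
      · exact hmemS _ hγA
      · exact hmemS _ hu0A
      · exact hmemS _ hu1A
      · exact hmemS _ hu2A
      · exact hmemS _ hδA
    have hcardT : T.card = 5 := by
      rw [hT]
      rw [Finset.card_insert_of_notMem (by
        simp only [Finset.mem_insert, Finset.mem_singleton, hginj.eq_iff]
        push_neg
        exact ⟨hγu i0, hγu i1, hγu i2, hδγ.symm⟩)]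
      rw [Finset.card_insert_of_notMem (by
        simp only [Finset.mem_insert, Finset.mem_singleton, hginj.eq_iff]
        push_neg
        exact ⟨huu i0 i1 h01, huu i0 i2 h02, fun h => hδu i0 h.symm⟩)]
      rw [Finset.card_insert_of_notMem (by
        simp only [Finset.mem_insert, Finset.mem_singleton, hginj.eq_iff]
        push_neg
        exact ⟨huu i1 i2 h12, fun h => hδu i1 h.symm⟩)]
      rw [Finset.card_insert_of_notMem (by
        simp only [Finset.mem_singleton, hginj.eq_iff]
        exact fun h => hδu i2 h.symm)]
      simp
    have hcardS : S.card ≤ 4 := by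
      have a1 := Finset.card_insert_le (q1 F d) ({q2 F d, q3 F d, q4 F d} : Finset _)
      have a2 := Finset.card_insert_le (q2 F d) ({q3 F d, q4 F d} : Finset _)
      have a3 := Finset.card_insert_le (q3 F d) ({q4 F d} : Finset _)
      have a4 : ({q4 F d} : Finset (Fin d → F)).card = 1 := Finset.card_singleton _
      rw [hS]
      omega
    have := Finset.card_le_card hTS
    omega
  -- choose the fifth element: two of three coordinates on the same side
  have hP : ∀ c : Fin d, c = i0 ∨ c = i1 ∨ c = i2 → γ c < α c ∨ γ c < β c := by
    intro c hc
    have h1 : γ c ≤ α c := hγα c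
    have h2 : γ c ≤ β c := hγβ c
    have h3 := hne c hc
    rcases hγch c with h' | h' <;> rcases Nat.lt_or_ge (α c) (β c) with h4 | h4 <;> omega
  by_cases p0 : γ i0 < α i0 <;> by_cases p1 : γ i1 < α i1 <;> by_cases p2 : γ i2 < α i2
  · exact final α hαA i0 i1 (Or.inl rfl) (Or.inr (Or.inl rfl)) h01 p0 p1
  · exact final α hαA i0 i1 (Or.inl rfl) (Or.inr (Or.inl rfl)) h01 p0 p1
  · exact final α hαA i0 i2 (Or.inl rfl) (Or.inr (Or.inr rfl)) h02 p0 p2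
  · have q1' := (hP i1 (Or.inr (Or.inl rfl))).resolve_left p1
    have q2' := (hP i2 (Or.inr (Or.inr rfl))).resolve_left p2
    exact final β hβA i1 i2 (Or.inr (Or.inl rfl)) (Or.inr (Or.inr rfl)) h12 q1' q2'
  · exact final α hαA i1 i2 (Or.inr (Or.inl rfl)) (Or.inr (Or.inr rfl)) h12 p1 p2
  · have q0' := (hP i0 (Or.inl rfl)).resolve_left p0
    have q2' := (hP i2 (Or.inr (Or.inr rfl))).resolve_left p2
    exact final β hβA i0 i2 (Or.inl rfl) (Or.inr (Or.inr rfl)) h02 q0' q2'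
  · have q0' := (hP i0 (Or.inl rfl)).resolve_left p0
    have q1' := (hP i1 (Or.inr (Or.inl rfl))).resolve_left p1
    exact final β hβA i0 i1 (Or.inl rfl) (Or.inr (Or.inl rfl)) h01 q0' q1'
  · have q0' := (hP i0 (Or.inl rfl)).resolve_left p0
    have q1' := (hP i1 (Or.inr (Or.inl rfl))).resolve_left p1
    exact final β hβA i0 i1 (Or.inl rfl) (Or.inr (Or.inl rfl)) h01 q0' q1'


end Stmt13Aux

/-- Theorem 3.4. For every `d ≥ 3` there exists a finite set of distinct
points `Ξ ⊆ F^d` which is not Cartesian but whose vanishing ideal has a unique monomial order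
quotient basis. -/
theorem stmt13 {F : Type*} [Field F] [CharZero F] {d : ℕ} (hd : 3 ≤ d) :
    ∃ Ξ : Set (Fin d → F), Ξ.Finite ∧ ¬ IsCartesian Ξ ∧
      ∃! O : Set (Fin d →₀ ℕ), IsMOQB (vanishIdeal Ξ) O := by
  refine ⟨{Stmt13Aux.q1 F d, Stmt13Aux.q2 F d, Stmt13Aux.q3 F d, Stmt13Aux.q4 F d},
    Set.Finite.insert _ (Set.Finite.insert _ (Set.Finite.insert _ (Set.finite_singleton _))),
    Stmt13Aux.notCart hd, Stmt13Aux.moqbExu hd⟩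
end

section
/- For d ≥ 3, let Ξ_d ⊂ F^d be the four-point set {(0,0,0,0,...,0), (0,1,0,0,...,0), (0,0,1,0,...,0), (1,0,1,0,...,0)} (the last d−3 coordinates of each point being zero). Then Ξ_d is not a Cartesian set, and the vanishing ideal I(Ξ_d) has a unique monomial order quotient basis, namely {1, x_1, x_2, x_3}. -/
open MvPolynomial

section Aux
open Submodule Set

variable {F : Type*} [Field F] {d : ℕ}

def pts (i₀ i₁ i₂ : Fin d) : Fin 4 → Fin d → F :=
  ![fun _ => 0, fun k => if k = i₁ then 1 else 0, fun k => if k = i₂ then 1 else 0,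
    fun k => if k = i₀ ∨ k = i₂ then 1 else 0]

def Wm : Fin 4 → Fin 4 → F := ![![1,1,1,1], ![0,1,0,0], ![0,0,1,1], ![0,0,0,1]]

noncomputable def Vm (i₀ i₁ i₂ : Fin d) (t : Fin d →₀ ℕ) : Fin 4 → F :=
  fun j => eval (pts i₀ i₁ i₂ j) (monomial t (1 : F))

open scoped Classical in
lemma eval_monomial_01 (ξ : Fin d → F) (hξ : ∀ i, ξ i = 0 ∨ ξ i = 1) (t : Fin d →₀ ℕ) :
    eval ξ (monomial t (1 : F)) = if ∀ i ∈ t.support, ξ i = 1 then 1 else 0 := by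
  rw [eval_monomial, one_mul, Finsupp.prod]
  split_ifs with h
  · exact Finset.prod_eq_one fun i hi => by rw [h i hi, one_pow]
  · push_neg at h
    obtain ⟨i, hi, hne⟩ := h
    refine Finset.prod_eq_zero hi ?_
    rcases hξ i with h0 | h1
    · rw [h0, zero_pow (Finsupp.mem_support_iff.mp hi)]
    · exact absurd h1 hne

variable (i₀ i₁ i₂ : Fin d)

open scoped Classical in
lemma Vm_0 (t : Fin d →₀ ℕ) : Vm (F := F) i₀ i₁ i₂ t 0 = if t = 0 then 1 else 0 := by
  have hp : pts (F := F) i₀ i₁ i₂ 0 = fun _ => 0 := rfl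
  rw [Vm, hp, eval_monomial_01 _ (fun i => Or.inl rfl)]
  rcases eq_or_ne t 0 with rfl | h
  · simp
  · rw [if_neg, if_neg h]
    obtain ⟨i, hi⟩ := Finsupp.support_nonempty_iff.mpr h
    exact fun H => zero_ne_one (H i hi)

open scoped Classical in
lemma Vm_1 (t : Fin d →₀ ℕ) :
    Vm (F := F) i₀ i₁ i₂ t 1 = if ∀ i ∈ t.support, i = i₁ then 1 else 0 := by
  have hp : pts (F := F) i₀ i₁ i₂ 1 = fun k => if k = i₁ then 1 else 0 := rfl
  rw [Vm, hp, eval_monomial_01 _ (fun i => by by_cases h : i = i₁ <;> simp [h])]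
  by_cases h : ∀ i ∈ t.support, i = i₁
  · rw [if_pos h, if_pos fun i hi => by simp [h i hi]]
  · rw [if_neg h, if_neg]
    intro H; apply h; intro i hi
    have h1 := H i hi
    by_contra hne
    rw [if_neg hne] at h1
    exact zero_ne_one h1

open scoped Classical in
lemma Vm_2 (t : Fin d →₀ ℕ) :
    Vm (F := F) i₀ i₁ i₂ t 2 = if ∀ i ∈ t.support, i = i₂ then 1 else 0 := by
  have hp : pts (F := F) i₀ i₁ i₂ 2 = fun k => if k = i₂ then 1 else 0 := rfl
  rw [Vm, hp, eval_monomial_01 _ (fun i => by by_cases h : i = i₂ <;> simp [h])]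
  by_cases h : ∀ i ∈ t.support, i = i₂
  · rw [if_pos h, if_pos fun i hi => by simp [h i hi]]
  · rw [if_neg h, if_neg]
    intro H; apply h; intro i hi
    have h1 := H i hi
    by_contra hne
    rw [if_neg hne] at h1
    exact zero_ne_one h1

open scoped Classical in
lemma Vm_3 (t : Fin d →₀ ℕ) :
    Vm (F := F) i₀ i₁ i₂ t 3 = if ∀ i ∈ t.support, i = i₀ ∨ i = i₂ then 1 else 0 := by
  have hp : pts (F := F) i₀ i₁ i₂ 3 = fun k => if k = i₀ ∨ k = i₂ then 1 else 0 := rfl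
  rw [Vm, hp, eval_monomial_01 _ (fun i => by by_cases h : i = i₀ ∨ i = i₂ <;> simp [h])]
  by_cases h : ∀ i ∈ t.support, i = i₀ ∨ i = i₂
  · rw [if_pos h, if_pos fun i hi => by simp [h i hi]]
  · rw [if_neg h, if_neg]
    intro H; apply h; intro i hi
    have h1 := H i hi
    by_contra hne
    rw [if_neg hne] at h1
    exact zero_ne_one h1

end Aux

lemma funext4 {M : Type*} {f g : Fin 4 → M} (h0 : f 0 = g 0) (h1 : f 1 = g 1)
    (h2 : f 2 = g 2) (h3 : f 3 = g 3) : f = g := by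
  funext j
  fin_cases j <;> assumption

section Aux2
open Submodule Set
variable {F : Type*} [Field F] {d : ℕ} (i₀ i₁ i₂ : Fin d)

lemma Vm_rep0 : Vm (F := F) i₀ i₁ i₂ 0 = Wm 0 := by
  refine funext4 ?_ ?_ ?_ ?_ <;>
    · simp only [Vm_0, Vm_1, Vm_2, Vm_3]
      rw [if_pos (by simp)]
      rfl

lemma Vm_rep1 (h01 : i₀ ≠ i₁) (h12 : i₁ ≠ i₂) :
    Vm (F := F) i₀ i₁ i₂ (Finsupp.single i₁ 1) = Wm 1 := by
  have hs : (Finsupp.single i₁ 1).support = {i₁} := Finsupp.support_single_ne_zero _ one_ne_zero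
  refine funext4 ?_ ?_ ?_ ?_
  · rw [Vm_0, if_neg (by simp [Finsupp.single_eq_zero])]; rfl
  · rw [Vm_1, if_pos (by simp [hs])]; rfl
  · rw [Vm_2, if_neg (by simp [hs]; exact h12)]; rfl
  · rw [Vm_3, if_neg (by simp [hs, (h01.symm : i₁ ≠ i₀)]; exact h12)]; rfl

lemma Vm_rep2 (h02 : i₀ ≠ i₂) (h12 : i₁ ≠ i₂) :
    Vm (F := F) i₀ i₁ i₂ (Finsupp.single i₂ 1) = Wm 2 := by
  have hs : (Finsupp.single i₂ 1).support = {i₂} := Finsupp.support_single_ne_zero _ one_ne_zero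
  refine funext4 ?_ ?_ ?_ ?_
  · rw [Vm_0, if_neg (by simp [Finsupp.single_eq_zero])]; rfl
  · rw [Vm_1, if_neg (by simp [hs]; exact h12.symm)]; rfl
  · rw [Vm_2, if_pos (by simp [hs])]; rfl
  · rw [Vm_3, if_pos (by simp [hs])]; rfl

lemma Vm_rep3 (h01 : i₀ ≠ i₁) (h02 : i₀ ≠ i₂) :
    Vm (F := F) i₀ i₁ i₂ (Finsupp.single i₀ 1) = Wm 3 := by
  have hs : (Finsupp.single i₀ 1).support = {i₀} := Finsupp.support_single_ne_zero _ one_ne_zero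
  refine funext4 ?_ ?_ ?_ ?_
  · rw [Vm_0, if_neg (by simp [Finsupp.single_eq_zero])]; rfl
  · rw [Vm_1, if_neg (by simp [hs]; exact h01)]; rfl
  · rw [Vm_2, if_neg (by simp [hs]; exact h02)]; rfl
  · rw [Vm_3, if_pos (by simp [hs])]; rfl

lemma Vm_classify (h01 : i₀ ≠ i₁) (h02 : i₀ ≠ i₂) (h12 : i₁ ≠ i₂) (t : Fin d →₀ ℕ) :
    (t = 0 ∧ Vm (F := F) i₀ i₁ i₂ t = Wm 0) ∨
    (i₁ ∈ t.support ∧ Vm (F := F) i₀ i₁ i₂ t = Wm 1) ∨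
    (i₂ ∈ t.support ∧ Vm (F := F) i₀ i₁ i₂ t = Wm 2) ∨
    (i₀ ∈ t.support ∧ Vm (F := F) i₀ i₁ i₂ t = Wm 3) ∨
    Vm (F := F) i₀ i₁ i₂ t = 0 := by
  rcases eq_or_ne t 0 with rfl | hne
  · exact Or.inl ⟨rfl, Vm_rep0 i₀ i₁ i₂⟩
  obtain ⟨w, hw⟩ := Finsupp.support_nonempty_iff.mpr hne
  by_cases hB : ∀ i ∈ t.support, i = i₁
  · refine Or.inr (Or.inl ⟨(hB w hw) ▸ hw, funext4 ?_ ?_ ?_ ?_⟩)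
    · rw [Vm_0, if_neg hne]; rfl
    · rw [Vm_1, if_pos hB]; rfl
    · rw [Vm_2, if_neg fun H => h12 (((hB w hw).symm).trans (H w hw))]; rfl
    · rw [Vm_3, if_neg ?_]; · rfl
      intro H
      rcases H w hw with h | h
      · exact h01 (h.symm.trans (hB w hw))
      · exact h12 ((hB w hw).symm.trans h)
  by_cases hC : ∀ i ∈ t.support, i = i₀ ∨ i = i₂
  · by_cases h0 : i₀ ∈ t.support
    · refine Or.inr (Or.inr (Or.inr (Or.inl ⟨h0, funext4 ?_ ?_ ?_ ?_⟩)))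
      · rw [Vm_0, if_neg hne]; rfl
      · rw [Vm_1, if_neg hB]; rfl
      · rw [Vm_2, if_neg fun H => h02 (H i₀ h0)]; rfl
      · rw [Vm_3, if_pos hC]; rfl
    · have hC' : ∀ i ∈ t.support, i = i₂ := by
        intro i hi
        rcases hC i hi with h | h
        · exact absurd (h ▸ hi) h0
        · exact h
      refine Or.inr (Or.inr (Or.inl ⟨(hC' w hw) ▸ hw, funext4 ?_ ?_ ?_ ?_⟩))
      · rw [Vm_0, if_neg hne]; rfl
      · rw [Vm_1, if_neg fun H => hB H]; rfl
      · rw [Vm_2, if_pos hC']; rfl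
      · rw [Vm_3, if_pos hC]; rfl
  · refine Or.inr (Or.inr (Or.inr (Or.inr (funext4 ?_ ?_ ?_ ?_))))
    · rw [Vm_0, if_neg hne]; rfl
    · rw [Vm_1, if_neg hB]; rfl
    · rw [Vm_2, if_neg fun H => hC fun i hi => Or.inr (H i hi)]; rfl
    · rw [Vm_3, if_neg hC]; rfl
end Aux2

section Aux3
open Submodule Set
variable {F : Type*} [Field F] {d : ℕ} (i₀ i₁ i₂ : Fin d)

abbrev XiSet (i₀ i₁ i₂ : Fin d) : Set (Fin d → F) :=
  {(fun _ => 0), (fun k => if k = i₁ then 1 else 0), (fun k => if k = i₂ then 1 else 0),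
    (fun k => if k = i₀ ∨ k = i₂ then 1 else 0)}

noncomputable def Phi : MvPolynomial (Fin d) F →ₐ[F] (Fin 4 → F) :=
  aeval fun i => fun j => pts i₀ i₁ i₂ j i

lemma Phi_apply (p : MvPolynomial (Fin d) F) (j : Fin 4) :
    Phi i₀ i₁ i₂ p j = eval (pts i₀ i₁ i₂ j) p := by
  have h1 : (Pi.evalAlgHom F (fun _ : Fin 4 => F) j).comp (Phi i₀ i₁ i₂)
      = aeval (fun i => pts i₀ i₁ i₂ j i) := by
    apply MvPolynomial.algHom_ext
    intro i
    simp [Phi]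
  have h2 : Phi i₀ i₁ i₂ p j = (Pi.evalAlgHom F (fun _ : Fin 4 => F) j) (Phi i₀ i₁ i₂ p) := rfl
  rw [h2, ← AlgHom.comp_apply, h1, aeval_def, Algebra.algebraMap_self]
  rfl

lemma mem_vanish_iff (p : MvPolynomial (Fin d) F) :
    p ∈ vanishIdeal (XiSet (F := F) i₀ i₁ i₂) ↔
      ∀ j : Fin 4, eval (pts i₀ i₁ i₂ j) p = 0 := by
  simp only [vanishIdeal, Ideal.mem_iInf, RingHom.mem_ker, XiSet, Set.mem_insert_iff,
    Set.mem_singleton_iff]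
  constructor
  · intro h j
    fin_cases j
    · exact h _ (Or.inl rfl)
    · exact h _ (Or.inr (Or.inl rfl))
    · exact h _ (Or.inr (Or.inr (Or.inl rfl)))
    · exact h _ (Or.inr (Or.inr (Or.inr rfl)))
  · rintro h ξ (rfl | rfl | rfl | rfl)
    · exact h 0
    · exact h 1
    · exact h 2
    · exact h 3

noncomputable def qHom :
    (MvPolynomial (Fin d) F ⧸ vanishIdeal (XiSet (F := F) i₀ i₁ i₂)) →ₐ[F] (Fin 4 → F) :=
  Ideal.Quotient.liftₐ _ (Phi i₀ i₁ i₂) fun a ha => funext fun j => by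
    rw [Phi_apply]
    exact (mem_vanish_iff i₀ i₁ i₂ a).1 ha j

lemma qHom_mk (p : MvPolynomial (Fin d) F) :
    qHom i₀ i₁ i₂ (Ideal.Quotient.mk _ p) = Phi i₀ i₁ i₂ p := by
  simp [qHom, Ideal.Quotient.liftₐ_apply]
  rfl

lemma qHom_injective : Function.Injective (qHom (F := F) i₀ i₁ i₂) := by
  rw [injective_iff_map_eq_zero]
  intro a ha
  obtain ⟨p, rfl⟩ := Ideal.Quotient.mk_surjective a
  rw [qHom_mk] at ha
  rw [Ideal.Quotient.eq_zero_iff_mem]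
  refine (mem_vanish_iff i₀ i₁ i₂ p).2 fun j => ?_
  rw [← Phi_apply, ha]
  rfl

lemma qHom_surjective (h01 : i₀ ≠ i₁) (h02 : i₀ ≠ i₂) (h12 : i₁ ≠ i₂) :
    Function.Surjective (qHom (F := F) i₀ i₁ i₂) := by
  intro w
  refine ⟨Ideal.Quotient.mk _ (C (w 0) * (1 - X i₁ - X i₂) + C (w 1) * X i₁
    + C (w 2) * (X i₂ - X i₀) + C (w 3) * X i₀), ?_⟩
  rw [qHom_mk]
  refine funext4 ?_ ?_ ?_ ?_ <;>
    (rw [Phi_apply]; simp [pts, h01, h02, h12, h01.symm, h02.symm, h12.symm]; try ring)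

set_option maxHeartbeats 1000000 in
noncomputable def Eqv (h01 : i₀ ≠ i₁) (h02 : i₀ ≠ i₂) (h12 : i₁ ≠ i₂) :
    (MvPolynomial (Fin d) F ⧸ vanishIdeal (XiSet (F := F) i₀ i₁ i₂)) ≃ₗ[F] (Fin 4 → F) :=
  LinearEquiv.ofBijective (qHom i₀ i₁ i₂).toLinearMap
    ⟨qHom_injective i₀ i₁ i₂, qHom_surjective i₀ i₁ i₂ h01 h02 h12⟩

lemma transfer (h01 : i₀ ≠ i₁) (h02 : i₀ ≠ i₂) (h12 : i₁ ≠ i₂) (O : Set (Fin d →₀ ℕ)) :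
    (LinearIndependent F (fun t : O => Ideal.Quotient.mk
        (vanishIdeal (XiSet (F := F) i₀ i₁ i₂)) (monomial (t : Fin d →₀ ℕ) (1 : F))) ↔
      LinearIndependent F (fun t : O => Vm (F := F) i₀ i₁ i₂ (t : Fin d →₀ ℕ))) ∧
    (Submodule.span F (Set.range fun t : O => Ideal.Quotient.mk
        (vanishIdeal (XiSet (F := F) i₀ i₁ i₂)) (monomial (t : Fin d →₀ ℕ) (1 : F))) = ⊤ ↔
      Submodule.span F
        (Set.range fun t : O => Vm (F := F) i₀ i₁ i₂ (t : Fin d →₀ ℕ)) = ⊤) := by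
  set e := Eqv (F := F) i₀ i₁ i₂ h01 h02 h12 with he
  have hcomp : (⇑e.toLinearMap) ∘ (fun t : O => Ideal.Quotient.mk
      (vanishIdeal (XiSet (F := F) i₀ i₁ i₂)) (monomial (t : Fin d →₀ ℕ) (1 : F)))
      = fun t : O => Vm (F := F) i₀ i₁ i₂ (t : Fin d →₀ ℕ) := by
    funext t
    show qHom i₀ i₁ i₂ (Ideal.Quotient.mk _ (monomial (t : Fin d →₀ ℕ) (1 : F))) = _
    rw [qHom_mk]
    funext j
    rw [Phi_apply]
    rfl
  constructor
  · have h1 := LinearMap.linearIndependent_iff (v := fun t : O => Ideal.Quotient.mk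
      (vanishIdeal (XiSet (F := F) i₀ i₁ i₂)) (monomial (t : Fin d →₀ ℕ) (1 : F)))
      e.toLinearMap (LinearEquiv.ker e)
    rw [hcomp] at h1
    exact h1.symm
  · have h2 : Submodule.span F (Set.range fun t : O => Vm (F := F) i₀ i₁ i₂ (t : Fin d →₀ ℕ))
        = Submodule.map e.toLinearMap (Submodule.span F (Set.range fun t : O =>
            Ideal.Quotient.mk (vanishIdeal (XiSet (F := F) i₀ i₁ i₂))
            (monomial (t : Fin d →₀ ℕ) (1 : F)))) := by
      rw [← hcomp, Set.range_comp, Submodule.span_image]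
    constructor
    · intro h
      rw [h2, h, Submodule.map_top, LinearMap.range_eq_top]
      exact e.surjective
    · intro h
      rw [h2] at h
      refine Submodule.map_injective_of_injective (f := e.toLinearMap) e.injective ?_
      rw [h, Submodule.map_top]
      exact (LinearMap.range_eq_top.mpr e.surjective).symm

lemma Wm_li : LinearIndependent F (Wm (F := F)) := by
  rw [Fintype.linearIndependent_iff]
  intro g hg
  have c0 := congrFun hg 0
  have c1 := congrFun hg 1
  have c2 := congrFun hg 2
  have c3 := congrFun hg 3
  simp [Fin.sum_univ_four, Wm, Matrix.vecHead, Matrix.vecTail] at c0 c1 c2 c3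
  have hg0 : g 0 = 0 := c0
  have hg1 : g 1 = 0 := by rw [hg0] at c1; linear_combination c1
  have hg2 : g 2 = 0 := by rw [hg0] at c2; linear_combination c2
  have hg3 : g 3 = 0 := by rw [hg0, hg2] at c3; linear_combination c3
  intro i
  fin_cases i <;> assumption

lemma Wm_span : Submodule.span F (Set.range (Wm (F := F))) = ⊤ :=
  (Wm_li).span_eq_top_of_card_eq_finrank (by simp [Module.finrank_pi])

lemma Wm_ne_zero (k : Fin 4) : Wm (F := F) k ≠ 0 := Wm_li.ne_zero k

lemma single_le_of_mem_support {i : Fin d} {t : Fin d →₀ ℕ} (h : i ∈ t.support) :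
    Finsupp.single i 1 ≤ t := by
  rw [Finsupp.le_def]
  intro k
  rcases eq_or_ne k i with rfl | hk
  · rw [Finsupp.single_eq_same]
    exact Nat.one_le_iff_ne_zero.mpr (Finsupp.mem_support_iff.mp h)
  · rw [Finsupp.single_eq_of_ne' (Ne.symm hk)]
    exact Nat.zero_le _

lemma le_single_cases {i : Fin d} {t : Fin d →₀ ℕ} (h : t ≤ Finsupp.single i 1) :
    t = 0 ∨ t = Finsupp.single i 1 := by
  rw [Finsupp.le_def] at h
  by_cases h0 : t i = 0
  · left
    ext k
    rcases eq_or_ne k i with rfl | hk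
    · exact h0
    · have := h k
      rw [Finsupp.single_eq_of_ne' (Ne.symm hk)] at this
      exact Nat.le_zero.mp this
  · right
    ext k
    rcases eq_or_ne k i with rfl | hk
    · have := h k
      rw [Finsupp.single_eq_same] at this ⊢
      omega
    · have := h k
      rw [Finsupp.single_eq_of_ne' (Ne.symm hk)] at this ⊢
      exact Nat.le_zero.mp this

lemma moqb_exist (h01 : i₀ ≠ i₁) (h02 : i₀ ≠ i₂) (h12 : i₁ ≠ i₂) :
    IsMOQB (vanishIdeal (XiSet (F := F) i₀ i₁ i₂))
      ({0, Finsupp.single i₀ 1, Finsupp.single i₁ 1, Finsupp.single i₂ 1} :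
        Set (Fin d →₀ ℕ)) := by
  set Os : Set (Fin d →₀ ℕ) :=
    {0, Finsupp.single i₀ 1, Finsupp.single i₁ 1, Finsupp.single i₂ 1} with hOs
  have m0 : (0 : Fin d →₀ ℕ) ∈ Os := by simp [hOs]
  have mA : Finsupp.single i₀ 1 ∈ Os := by simp [hOs]
  have mB : Finsupp.single i₁ 1 ∈ Os := by simp [hOs]
  have mC : Finsupp.single i₂ 1 ∈ Os := by simp [hOs]
  have hA0 : Finsupp.single i₀ (1 : ℕ) ≠ 0 := by simp [Finsupp.single_eq_zero]
  have hB0 : Finsupp.single i₁ (1 : ℕ) ≠ 0 := by simp [Finsupp.single_eq_zero]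
  have hC0 : Finsupp.single i₂ (1 : ℕ) ≠ 0 := by simp [Finsupp.single_eq_zero]
  have hAB : Finsupp.single i₀ (1 : ℕ) ≠ Finsupp.single i₁ 1 := by
    simp [Finsupp.single_eq_single_iff, h01]
  have hAC : Finsupp.single i₀ (1 : ℕ) ≠ Finsupp.single i₂ 1 := by
    simp [Finsupp.single_eq_single_iff, h02]
  have hBC : Finsupp.single i₁ (1 : ℕ) ≠ Finsupp.single i₂ 1 := by
    simp [Finsupp.single_eq_single_iff, h12]
  set ψ : Fin 4 → ↥Os := ![⟨0, m0⟩, ⟨Finsupp.single i₁ 1, mB⟩, ⟨Finsupp.single i₂ 1, mC⟩,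
    ⟨Finsupp.single i₀ 1, mA⟩] with hψ
  have hψbij : Function.Bijective ψ := by
    constructor
    · intro a b h
      have hv := congrArg Subtype.val h
      fin_cases a <;> fin_cases b <;> first
        | rfl
        | exact absurd hv hA0 | exact absurd hv hA0.symm
        | exact absurd hv hB0 | exact absurd hv hB0.symm
        | exact absurd hv hC0 | exact absurd hv hC0.symm
        | exact absurd hv hAB | exact absurd hv hAB.symm
        | exact absurd hv hAC | exact absurd hv hAC.symm
        | exact absurd hv hBC | exact absurd hv hBC.symm
    · rintro ⟨t, ht⟩
      have ht' : t = 0 ∨ t = Finsupp.single i₀ 1 ∨ t = Finsupp.single i₁ 1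
          ∨ t = Finsupp.single i₂ 1 := by simpa [hOs] using ht
      rcases ht' with rfl | rfl | rfl | rfl
      · exact ⟨0, rfl⟩
      · exact ⟨3, rfl⟩
      · exact ⟨1, rfl⟩
      · exact ⟨2, rfl⟩
  have hcomp : (fun t : Os => Vm (F := F) i₀ i₁ i₂ (t : Fin d →₀ ℕ))
      ∘ ⇑(Equiv.ofBijective ψ hψbij) = Wm := by
    refine funext4 ?_ ?_ ?_ ?_
    · exact Vm_rep0 i₀ i₁ i₂
    · exact Vm_rep1 i₀ i₁ i₂ h01 h12
    · exact Vm_rep2 i₀ i₁ i₂ h02 h12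
    · exact Vm_rep3 i₀ i₁ i₂ h01 h02
  refine ⟨(Set.finite_singleton _).insert _ |>.insert _ |>.insert _, ?_, ?_, ?_⟩
  · intro a b hba ha
    rcases ha with rfl | rfl | rfl | rfl
    · have : b = 0 := by
        ext k
        exact Nat.le_zero.mp (Finsupp.le_def.mp hba k)
      exact this ▸ m0
    · rcases le_single_cases hba with rfl | rfl
      · exact m0
      · exact mA
    · rcases le_single_cases hba with rfl | rfl
      · exact m0
      · exact mB
    · rcases le_single_cases hba with rfl | rfl
      · exact m0
      · exact mC
  · exact (transfer i₀ i₁ i₂ h01 h02 h12 Os).1.mpr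
      ((linearIndependent_equiv' (Equiv.ofBijective ψ hψbij) hcomp).mp Wm_li)
  · refine (transfer i₀ i₁ i₂ h01 h02 h12 Os).2.mpr ?_
    have hr : Set.range (fun t : Os => Vm (F := F) i₀ i₁ i₂ (t : Fin d →₀ ℕ))
        = Set.range (Wm (F := F)) := by
      rw [← hcomp]
      exact ((Equiv.ofBijective ψ hψbij).surjective.range_comp _).symm
    rw [hr, Wm_span]

set_option maxHeartbeats 2000000 in
lemma moqb_unique (h01 : i₀ ≠ i₁) (h02 : i₀ ≠ i₂) (h12 : i₁ ≠ i₂)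
    (O : Set (Fin d →₀ ℕ)) (hO : IsMOQB (vanishIdeal (XiSet (F := F) i₀ i₁ i₂)) O) :
    O = ({0, Finsupp.single i₀ 1, Finsupp.single i₁ 1, Finsupp.single i₂ 1} :
      Set (Fin d →₀ ℕ)) := by
  obtain ⟨hfin, hlow, hLI, hspan⟩ := hO
  have hLI' := (transfer i₀ i₁ i₂ h01 h02 h12 O).1.mp hLI
  have hspan' := (transfer i₀ i₁ i₂ h01 h02 h12 O).2.mp hspan
  have hne0 : ∀ t ∈ O, Vm (F := F) i₀ i₁ i₂ t ≠ 0 := fun t ht => LinearIndependent.ne_zero (⟨t, ht⟩ : O) hLI'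
  have hinj : ∀ t ∈ O, ∀ u ∈ O, Vm (F := F) i₀ i₁ i₂ t = Vm (F := F) i₀ i₁ i₂ u → t = u := by
    intro t ht u hu h
    have := hLI'.injective (a₁ := ⟨t, ht⟩) (a₂ := ⟨u, hu⟩) h
    exact Subtype.mk.injEq .. ▸ this
  have hWinj := (Wm_li (F := F)).injective
  have pres : ∀ k : Fin 4, ∃ t ∈ O, Vm (F := F) i₀ i₁ i₂ t = Wm k := by
    classical
    intro k
    by_contra hk
    push_neg at hk
    set S : Finset (Fin 4 → F) := (Finset.univ.erase k).image (Wm (F := F)) with hS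
    have hsub : Set.range (fun t : O => Vm (F := F) i₀ i₁ i₂ (t : Fin d →₀ ℕ)) ⊆ ↑S := by
      rintro _ ⟨t, rfl⟩
      have hmem : ∀ j : Fin 4, Vm (F := F) i₀ i₁ i₂ ↑t = Wm j →
          Vm (F := F) i₀ i₁ i₂ ↑t ∈ (↑S : Set (Fin 4 → F)) := by
        intro j hj
        have hjk : j ≠ k := fun he => hk ↑t t.2 (he ▸ hj)
        refine Finset.mem_coe.mpr ?_
        rw [hS, Finset.mem_image]
        exact ⟨j, Finset.mem_erase.mpr ⟨hjk, Finset.mem_univ _⟩, hj.symm⟩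
      rcases Vm_classify (F := F) i₀ i₁ i₂ h01 h02 h12 ↑t with ⟨_, h⟩ | ⟨_, h⟩ | ⟨_, h⟩ | ⟨_, h⟩ | h
      · exact hmem 0 h
      · exact hmem 1 h
      · exact hmem 2 h
      · exact hmem 3 h
      · exact absurd h (hne0 ↑t t.2)
    have h2 := Submodule.span_mono (R := F) hsub
    rw [hspan'] at h2
    have h3 := Submodule.finrank_mono h2
    rw [finrank_top] at h3
    have h4 : Module.finrank F (Submodule.span F (↑S : Set (Fin 4 → F))) ≤ S.card :=
      finrank_span_finset_le_card S
    have h5 : S.card ≤ 3 := Finset.card_image_le.trans (by simp [Finset.card_erase_of_mem])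
    have h6 : Module.finrank F (Fin 4 → F) = 4 := by simp [Module.finrank_pi]
    omega
  -- representatives are in O
  have rep0 : (0 : Fin d →₀ ℕ) ∈ O := by
    obtain ⟨t, ht, hVt⟩ := pres 0
    rcases Vm_classify (F := F) i₀ i₁ i₂ h01 h02 h12 t with ⟨rfl, h⟩ | ⟨_, h⟩ | ⟨_, h⟩ | ⟨_, h⟩ | h
    · exact ht
    · exact absurd (hWinj (h.symm.trans hVt)) (by decide)
    · exact absurd (hWinj (h.symm.trans hVt)) (by decide)
    · exact absurd (hWinj (h.symm.trans hVt)) (by decide)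
    · exact absurd (h.symm.trans hVt).symm (Wm_ne_zero 0)
  have rep1 : Finsupp.single i₁ 1 ∈ O := by
    obtain ⟨t, ht, hVt⟩ := pres 1
    rcases Vm_classify (F := F) i₀ i₁ i₂ h01 h02 h12 t with ⟨rfl, h⟩ | ⟨hm, h⟩ | ⟨_, h⟩ | ⟨_, h⟩ | h
    · exact absurd (hWinj (h.symm.trans hVt)) (by decide)
    · exact hlow (single_le_of_mem_support hm) ht
    · exact absurd (hWinj (h.symm.trans hVt)) (by decide)
    · exact absurd (hWinj (h.symm.trans hVt)) (by decide)
    · exact absurd (h.symm.trans hVt).symm (Wm_ne_zero 1)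
  have rep2 : Finsupp.single i₂ 1 ∈ O := by
    obtain ⟨t, ht, hVt⟩ := pres 2
    rcases Vm_classify (F := F) i₀ i₁ i₂ h01 h02 h12 t with ⟨rfl, h⟩ | ⟨_, h⟩ | ⟨hm, h⟩ | ⟨_, h⟩ | h
    · exact absurd (hWinj (h.symm.trans hVt)) (by decide)
    · exact absurd (hWinj (h.symm.trans hVt)) (by decide)
    · exact hlow (single_le_of_mem_support hm) ht
    · exact absurd (hWinj (h.symm.trans hVt)) (by decide)
    · exact absurd (h.symm.trans hVt).symm (Wm_ne_zero 2)
  have rep3 : Finsupp.single i₀ 1 ∈ O := by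
    obtain ⟨t, ht, hVt⟩ := pres 3
    rcases Vm_classify (F := F) i₀ i₁ i₂ h01 h02 h12 t with ⟨rfl, h⟩ | ⟨_, h⟩ | ⟨_, h⟩ | ⟨hm, h⟩ | h
    · exact absurd (hWinj (h.symm.trans hVt)) (by decide)
    · exact absurd (hWinj (h.symm.trans hVt)) (by decide)
    · exact absurd (hWinj (h.symm.trans hVt)) (by decide)
    · exact hlow (single_le_of_mem_support hm) ht
    · exact absurd (h.symm.trans hVt).symm (Wm_ne_zero 3)
  ext u
  constructor
  · intro hu
    rcases Vm_classify (F := F) i₀ i₁ i₂ h01 h02 h12 u with ⟨rfl, h⟩ | ⟨_, h⟩ | ⟨_, h⟩ | ⟨_, h⟩ | h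
    · exact Set.mem_insert _ _
    · have : u = Finsupp.single i₁ 1 := hinj u hu _ rep1
        (h.trans (Vm_rep1 i₀ i₁ i₂ h01 h12).symm)
      rw [this]
      simp
    · have : u = Finsupp.single i₂ 1 := hinj u hu _ rep2
        (h.trans (Vm_rep2 i₀ i₁ i₂ h02 h12).symm)
      rw [this]
      simp
    · have : u = Finsupp.single i₀ 1 := hinj u hu _ rep3
        (h.trans (Vm_rep3 i₀ i₁ i₂ h01 h02).symm)
      rw [this]
      simp
    · exact absurd h (hne0 u hu)
  · rintro (rfl | rfl | rfl | rfl)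
    · exact rep0
    · exact rep3
    · exact rep1
    · exact rep2

lemma not_cartesian (h01 : i₀ ≠ i₁) (h02 : i₀ ≠ i₂) (h12 : i₁ ≠ i₂) :
    ¬ IsCartesian (XiSet (F := F) i₀ i₁ i₂) := by
  rintro ⟨A, y, hlow, hinj, him⟩
  have hm0 : (fun _ => (0 : F)) ∈ XiSet (F := F) i₀ i₁ i₂ := Set.mem_insert _ _
  have hm1 : (fun k => if k = i₁ then (1 : F) else 0) ∈ XiSet (F := F) i₀ i₁ i₂ := by
    right; left; rfl
  have hm2 : (fun k => if k = i₂ then (1 : F) else 0) ∈ XiSet (F := F) i₀ i₁ i₂ := by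
    right; right; left; rfl
  have hm3 : (fun k => if k = i₀ ∨ k = i₂ then (1 : F) else 0) ∈ XiSet (F := F) i₀ i₁ i₂ := by
    right; right; right; rfl
  rw [him] at hm0 hm1 hm2 hm3
  obtain ⟨α0, hA0, he0⟩ := hm0
  obtain ⟨α1, hA1, he1⟩ := hm1
  obtain ⟨α2, hA2, he2⟩ := hm2
  obtain ⟨α3, hA3, he3⟩ := hm3
  -- coordinate values of y
  have A0 : y i₀ (α0 i₀) = 0 := congrFun he0 i₀
  have A1 : y i₀ (α1 i₀) = 0 := by have := congrFun he1 i₀; rwa [if_neg h01] at this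
  have A2 : y i₀ (α2 i₀) = 0 := by have := congrFun he2 i₀; rwa [if_neg h02] at this
  have A3 : y i₀ (α3 i₀) = 1 := by
    have := congrFun he3 i₀; rwa [if_pos (Or.inl rfl)] at this
  have B0 : y i₁ (α0 i₁) = 0 := congrFun he0 i₁
  have B1 : y i₁ (α1 i₁) = 1 := by have := congrFun he1 i₁; rwa [if_pos rfl] at this
  have B2 : y i₁ (α2 i₁) = 0 := by have := congrFun he2 i₁; rwa [if_neg h12] at this
  have B3 : y i₁ (α3 i₁) = 0 := by
    have := congrFun he3 i₁
    rwa [if_neg (by rintro (h | h); exacts [h01 h.symm, h12 h])] at this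
  have C0 : y i₂ (α0 i₂) = 0 := congrFun he0 i₂
  have C1 : y i₂ (α1 i₂) = 0 := by have := congrFun he1 i₂; rwa [if_neg h12.symm] at this
  have C2 : y i₂ (α2 i₂) = 1 := by have := congrFun he2 i₂; rwa [if_pos rfl] at this
  have C3 : y i₂ (α3 i₂) = 1 := by
    have := congrFun he3 i₂; rwa [if_pos (Or.inr rfl)] at this
  -- induced equalities/inequalities of exponents
  have p01 : α1 i₀ = α0 i₀ := hinj i₀ (A1.trans A0.symm)
  have p02 : α2 i₀ = α0 i₀ := hinj i₀ (A2.trans A0.symm)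
  have pq : α3 i₀ ≠ α0 i₀ := by intro h; rw [h, A0] at A3; exact zero_ne_one A3
  have r02 : α2 i₁ = α0 i₁ := hinj i₁ (B2.trans B0.symm)
  have r03 : α3 i₁ = α0 i₁ := hinj i₁ (B3.trans B0.symm)
  have rs : α1 i₁ ≠ α0 i₁ := by intro h; rw [h, B0] at B1; exact zero_ne_one B1
  have u01 : α1 i₂ = α0 i₂ := hinj i₂ (C1.trans C0.symm)
  have v23 : α3 i₂ = α2 i₂ := hinj i₂ (C3.trans C2.symm)
  have uv : α2 i₂ ≠ α0 i₂ := by intro h; rw [h, C0] at C2; exact zero_ne_one C2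
  -- every element of A is one of the four
  have key : ∀ β ∈ A, β = α0 ∨ β = α1 ∨ β = α2 ∨ β = α3 := by
    intro β hβ
    have hβΞ : (fun i => y i (β i)) ∈ XiSet (F := F) i₀ i₁ i₂ := by
      rw [him]
      exact Set.mem_image_of_mem _ hβ
    have eqof : ∀ γ : Fin d → ℕ, (fun i => y i (β i)) = (fun i => y i (γ i)) → β = γ :=
      fun γ h => funext fun i => hinj i (congrFun h i)
    rcases hβΞ with h | h | h | h
    · exact Or.inl (eqof α0 (h.trans he0.symm))
    · exact Or.inr (Or.inl (eqof α1 (h.trans he1.symm)))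
    · exact Or.inr (Or.inr (Or.inl (eqof α2 (h.trans he2.symm))))
    · exact Or.inr (Or.inr (Or.inr (eqof α3 (h.trans he3.symm))))
  classical
  rcases Nat.lt_or_ge (α3 i₀) (α0 i₀) with hqp | hpq
  · -- case α3 i₀ < α0 i₀
    set β : Fin d → ℕ := Function.update α0 i₀ (α3 i₀) with hβ
    have hble : β ≤ α0 := by
      intro k
      rcases eq_or_ne k i₀ with rfl | hk
      · rw [hβ, Function.update_self]
        exact le_of_lt hqp
      · rw [hβ, Function.update_of_ne hk]
    rcases key β (hlow hble hA0) with h | h | h | h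
    · have := congrFun h i₀
      rw [hβ, Function.update_self] at this
      exact pq this
    · have := congrFun h i₁
      rw [hβ, Function.update_of_ne (Ne.symm h01)] at this
      exact rs this.symm
    · have := congrFun h i₂
      rw [hβ, Function.update_of_ne (Ne.symm h02)] at this
      exact uv this.symm
    · have := congrFun h i₂
      rw [hβ, Function.update_of_ne (Ne.symm h02)] at this
      exact uv (this.trans v23).symm
  rcases Nat.lt_or_ge (α2 i₂) (α0 i₂) with hvu | huv
  · -- case α2 i₂ < α0 i₂
    set β : Fin d → ℕ := Function.update α1 i₂ (α2 i₂) with hβ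
    have hble : β ≤ α1 := by
      intro k
      rcases eq_or_ne k i₂ with rfl | hk
      · rw [hβ, Function.update_self, u01]
        exact le_of_lt hvu
      · rw [hβ, Function.update_of_ne hk]
    rcases key β (hlow hble hA1) with h | h | h | h
    · have := congrFun h i₁
      rw [hβ, Function.update_of_ne h12] at this
      exact rs this
    · have := congrFun h i₂
      rw [hβ, Function.update_self, u01] at this
      exact uv this
    · have := congrFun h i₁
      rw [hβ, Function.update_of_ne h12] at this
      exact rs (this.trans r02)
    · have := congrFun h i₁
      rw [hβ, Function.update_of_ne h12] at this
      exact rs (this.trans r03)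
  · -- case α0 i₀ ≤ α3 i₀ and α0 i₂ ≤ α2 i₂
    set β : Fin d → ℕ := Function.update α3 i₂ (α0 i₂) with hβ
    have hble : β ≤ α3 := by
      intro k
      rcases eq_or_ne k i₂ with rfl | hk
      · rw [hβ, Function.update_self, v23]
        exact huv
      · rw [hβ, Function.update_of_ne hk]
    rcases key β (hlow hble hA3) with h | h | h | h
    · have := congrFun h i₀
      rw [hβ, Function.update_of_ne h02] at this
      exact pq this
    · have := congrFun h i₀
      rw [hβ, Function.update_of_ne h02] at this
      exact pq (this.trans p01)
    · have := congrFun h i₀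
      rw [hβ, Function.update_of_ne h02] at this
      exact pq (this.trans p02)
    · have := congrFun h i₂
      rw [hβ, Function.update_self] at this
      exact uv (this.trans v23).symm

end Aux3


set_option maxHeartbeats 2000000 in
/-- For `d ≥ 3`, the four-point set
`Ξ_d = {(0,0,0,0,…,0), (0,1,0,0,…,0), (0,0,1,0,…,0), (1,0,1,0,…,0)} ⊆ F^d`
(coordinates indexed by `i₀, i₁, i₂`, the first three indices) is not Cartesian, and its
vanishing ideal has a unique monomial order quotient basis, namely `{1, x₁, x₂, x₃}`. -/
theorem stmt14 {F : Type*} [Field F] [CharZero F] {d : ℕ} (hd : 3 ≤ d)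
    (i₀ i₁ i₂ : Fin d) (h₀ : (i₀ : ℕ) = 0) (h₁ : (i₁ : ℕ) = 1) (h₂ : (i₂ : ℕ) = 2) :
    ¬ IsCartesian ({(fun _ => 0), (fun k => if k = i₁ then 1 else 0),
          (fun k => if k = i₂ then 1 else 0),
          (fun k => if k = i₀ ∨ k = i₂ then 1 else 0)} : Set (Fin d → F)) ∧
    IsMOQB
      (vanishIdeal ({(fun _ => 0), (fun k => if k = i₁ then 1 else 0),
          (fun k => if k = i₂ then 1 else 0),
          (fun k => if k = i₀ ∨ k = i₂ then 1 else 0)} : Set (Fin d → F)))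
      ({0, Finsupp.single i₀ 1, Finsupp.single i₁ 1, Finsupp.single i₂ 1} :
        Set (Fin d →₀ ℕ)) ∧
    ∀ O : Set (Fin d →₀ ℕ),
      IsMOQB
        (vanishIdeal ({(fun _ => 0), (fun k => if k = i₁ then 1 else 0),
            (fun k => if k = i₂ then 1 else 0),
            (fun k => if k = i₀ ∨ k = i₂ then 1 else 0)} : Set (Fin d → F))) O →
      O = ({0, Finsupp.single i₀ 1, Finsupp.single i₁ 1, Finsupp.single i₂ 1} :
        Set (Fin d →₀ ℕ)) := by
  have h01 : i₀ ≠ i₁ := fun h => by rw [h, h₁] at h₀; exact absurd h₀ one_ne_zero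
  have h02 : i₀ ≠ i₂ := fun h => by rw [h, h₂] at h₀; exact absurd h₀ two_ne_zero
  have h12 : i₁ ≠ i₂ := fun h => by rw [h, h₂] at h₁; omega
  exact ⟨not_cartesian i₀ i₁ i₂ h01 h02 h12, moqb_exist i₀ i₁ i₂ h01 h02 h12,
    fun O hO => moqb_unique i₀ i₁ i₂ h01 h02 h12 O hO⟩
end
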